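/- arXiv:1512.05966 — 3 statements merged into one kernel-verified Lean document; each statement's English description precedes it below -/
import Mathlib

section
/- (Lusin–Menchoff lemma for the Cantor space) Let F be a closed subset of 2^ω and M ⊇ F a λ-measurable subset of 2^ω such that M has density 1 at every point of F. Then there is a closed set C ⊆ 2^ω such that (1) F ⊆ C ⊆ M, (2) M has density 1 at every point of C, and (3) C has density 1 at every point of F. -/
open MeasureTheory Filter Topology
open scoped ENNReal

/-- The basic cylinder `N_s` determined by a finite binary sequence `s`:
the set of all `β ∈ 2^ω` extending `s`. -/
def cyl (s : List Bool) : Set (ℕ → Bool) :=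
  {β | ∀ i : Fin s.length, β i = s.get i}

/-- The initial segment `β↾l` of `β ∈ 2^ω`, as a finite binary sequence. -/
def seg (β : ℕ → Bool) (l : ℕ) : List Bool := List.ofFn (fun i : Fin l => β i)

/-- A martingale: a `[0,1]`-valued function on finite binary sequences with
`f(s) = (f(s⌢0) + f(s⌢1))/2`. -/
def IsMartingale (f : List Bool → ℝ) : Prop :=
  (∀ s, f s ∈ Set.Icc (0:ℝ) 1) ∧
  ∀ s, f s = (f (s ++ [false]) + f (s ++ [true])) / 2

/-- The oscillation `osc(f,β) = inf_N sup_{p,q ≥ N} |f(β↾p) − f(β↾q)|`. -/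
noncomputable def osc (f : List Bool → ℝ) (β : ℕ → Bool) : ℝ :=
  ⨅ N : ℕ, ⨆ p : {n : ℕ // N ≤ n}, ⨆ q : {n : ℕ // N ≤ n},
    |f (seg β p.1) - f (seg β q.1)|

/-- The set of divergence `D(f) = {β : osc(f,β) > 0}`. -/
def divSet (f : List Bool → ℝ) : Set (ℕ → Bool) := {β | 0 < osc f β}

/-- `M` has density 1 at `β`: `λ(M ∩ N_{β↾l}) / λ(N_{β↾l}) → 1`. -/
def densityOne (μ : Measure (ℕ → Bool)) (M : Set (ℕ → Bool)) (β : ℕ → Bool) : Prop :=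
  Tendsto (fun l : ℕ => μ (M ∩ cyl (seg β l)) / μ (cyl (seg β l))) atTop (𝓝 1)

/-- A set is `Σ⁰₃` iff it is a countable union of `Gδ` sets. -/
def IsSigma03 {X : Type*} [TopologicalSpace X] (S : Set X) : Prop :=
  ∃ g : ℕ → Set X, (∀ n, IsGδ (g n)) ∧ S = ⋃ n, g n

/-- A set is coanalytic (`Π¹₁`) iff its complement is analytic. -/
def IsCoanalytic {X : Type*} [TopologicalSpace X] (S : Set X) : Prop :=
  MeasureTheory.AnalyticSet Sᶜ

/-- The associated (partial) function of a martingale: `ψ(f)(β) = lim_l f(β↾l)`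
(a junk value if the limit does not exist). -/
noncomputable def psi (f : List Bool → ℝ) (β : ℕ → Bool) : ℝ :=
  limUnder atTop (fun l => f (seg β l))

lemma mem_cyl {x : ℕ → Bool} {s : List Bool} :
    x ∈ cyl s ↔ ∀ i (h : i < s.length), x i = s[i] := by
  constructor
  · intro hx i h; exact hx ⟨i, h⟩
  · intro hx i; exact hx i i.2

@[simp] lemma seg_length (β : ℕ → Bool) (l : ℕ) : (seg β l).length = l := by
  simp [seg]

lemma seg_getElem (β : ℕ → Bool) (l : ℕ) (i : ℕ) (h : i < (seg β l).length) :
    (seg β l)[i] = β i := by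
  simp [seg]

lemma mem_cyl_seg (β : ℕ → Bool) (l : ℕ) : β ∈ cyl (seg β l) := by
  rw [mem_cyl]; intro i h; rw [seg_getElem]

@[simp] lemma cyl_nil : cyl [] = Set.univ := by
  ext x; simp [cyl]

lemma measurableSet_cyl (s : List Bool) : MeasurableSet (cyl s) := by
  have : cyl s = ⋂ i : Fin s.length, (fun β : ℕ → Bool => β i) ⁻¹' {s.get i} := by
    ext x; simp [cyl]
  rw [this]
  exact MeasurableSet.iInter fun i => (measurable_pi_apply _) (measurableSet_singleton _)

lemma isOpen_cyl (s : List Bool) : IsOpen (cyl s) := by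
  have : cyl s = ⋂ i : Fin s.length, (fun β : ℕ → Bool => β i) ⁻¹' {s.get i} := by
    ext x; simp [cyl]
  rw [this]
  exact isOpen_iInter_of_finite fun i => (continuous_apply _).isOpen_preimage _ (isOpen_discrete _)

lemma isClosed_cyl (s : List Bool) : IsClosed (cyl s) := by
  have : cyl s = ⋂ i : Fin s.length, (fun β : ℕ → Bool => β i) ⁻¹' {s.get i} := by
    ext x; simp [cyl]
  rw [this]
  exact isClosed_iInter fun i => (IsClosed.preimage (continuous_apply _) (isClosed_discrete _))

lemma cyl_mono {s t : List Bool} (h : s <+: t) : cyl t ⊆ cyl s := by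
  intro x hx
  rw [mem_cyl] at hx ⊢
  intro i hi
  rw [h.getElem hi]
  exact hx i (hi.trans_le h.length_le)

lemma prefix_of_mem_cyl {x : ℕ → Bool} {s t : List Bool} (hs : x ∈ cyl s) (ht : x ∈ cyl t)
    (hl : s.length ≤ t.length) : s <+: t := by
  rw [mem_cyl] at hs ht
  rw [List.prefix_iff_eq_take]
  apply List.ext_getElem (by simp [Nat.min_eq_left hl])
  intro i h1 h2
  rw [List.getElem_take]
  rw [← hs i h1, ht i (h1.trans_le hl)]

lemma seg_prefix (β : ℕ → Bool) {m l : ℕ} (h : m ≤ l) : seg β m <+: seg β l :=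
  prefix_of_mem_cyl (mem_cyl_seg β m) (mem_cyl_seg β l) (by simpa)

lemma eq_seg_of_mem_cyl {x : ℕ → Bool} {s : List Bool} (hx : x ∈ cyl s) :
    seg x s.length = s := by
  have h1 : s <+: seg x s.length :=
    prefix_of_mem_cyl hx (mem_cyl_seg x s.length) (by simp)
  exact (h1.eq_of_length (by simp)).symm

lemma exists_cyl_subset {U : Set (ℕ → Bool)} (hU : IsOpen U) {β : ℕ → Bool} (hβ : β ∈ U) :
    ∃ l, cyl (seg β l) ⊆ U := by
  obtain ⟨I, u, hIu, hsub⟩ := isOpen_pi_iff.1 hU β hβ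
  rcases I.eq_empty_or_nonempty with h | h
  · exact ⟨0, fun x _ => hsub (by simp [h])⟩
  · refine ⟨(I.max' h) + 1, fun x hx => hsub ?_⟩
    intro i hi
    have hix : x i = β i := by
      rw [mem_cyl] at hx
      have : i < (seg β (I.max' h + 1)).length := by
        simp only [seg_length]
        exact Nat.lt_succ_of_le (I.le_max' i hi)
      rw [hx i this, seg_getElem]
    rw [hix]; exact (hIu i hi).2

lemma seg_take (β : ℕ → Bool) {m l : ℕ} (h : m ≤ l) : List.take m (seg β l) = seg β m := by
  apply List.ext_getElem (by simp [Nat.min_eq_left h])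
  intro i h1 h2
  rw [List.getElem_take, seg_getElem, seg_getElem]

section Density

variable {μ : Measure (ℕ → Bool)} (hμ : ∀ s : List Bool, μ (cyl s) = (1/2 : ℝ≥0∞) ^ s.length)

include hμ

lemma prob_of_hμ : IsProbabilityMeasure μ := by
  constructor
  have := hμ []
  simpa using this

lemma cyl_ne_zero (s : List Bool) : μ (cyl s) ≠ 0 := by
  rw [hμ]; exact pow_ne_zero _ (by norm_num)

lemma cyl_ne_top (s : List Bool) : μ (cyl s) ≠ ∞ := by
  rw [hμ]
  exact ENNReal.pow_ne_top (by norm_num)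

lemma ratio_le_one (A : Set (ℕ → Bool)) (s : List Bool) :
    μ (A ∩ cyl s) / μ (cyl s) ≤ 1 := by
  rw [ENNReal.div_le_iff (cyl_ne_zero hμ s) (cyl_ne_top hμ s), one_mul]
  exact measure_mono Set.inter_subset_right

omit hμ

lemma measurable_ratio (A : Set (ℕ → Bool)) (l : ℕ) :
    Measurable (fun β => μ (A ∩ cyl (seg β l)) / μ (cyl (seg β l))) := by
  intro t _
  have : (fun β => μ (A ∩ cyl (seg β l)) / μ (cyl (seg β l))) ⁻¹' t =
      ⋃ s : {s : List Bool // s.length = l ∧ μ (A ∩ cyl s) / μ (cyl s) ∈ t}, cyl s.1 := by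
    ext β
    simp only [Set.mem_preimage, Set.mem_iUnion]
    constructor
    · intro hβ
      exact ⟨⟨seg β l, by simp, hβ⟩, mem_cyl_seg β l⟩
    · rintro ⟨⟨s, hsl, hst⟩, hβ⟩
      have : seg β l = s := by rw [← hsl]; exact eq_seg_of_mem_cyl hβ
      rw [this]; exact hst
  rw [this]
  exact MeasurableSet.iUnion fun s => measurableSet_cyl _

include hμ

/-- Vitali covering argument on cylinders: the set of points of `A` at which the relative
measure of `A` is frequently `≤ a < 1` is null. -/
lemma bad_set_null (A : Set (ℕ → Bool)) (hA : MeasurableSet A) {a : ℝ≥0∞} (ha : a < 1) :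
    μ {β | β ∈ A ∧ ∃ᶠ l in atTop, μ (A ∩ cyl (seg β l)) ≤ a * μ (cyl (seg β l))} = 0 := by
  classical
  haveI := prob_of_hμ hμ
  set E := {β | β ∈ A ∧ ∃ᶠ l in atTop, μ (A ∩ cyl (seg β l)) ≤ a * μ (cyl (seg β l))} with hE
  have hEA : E ⊆ A := fun β hβ => hβ.1
  have key : ∀ δ : ℝ≥0∞, δ ≠ 0 → μ E ≤ a * (μ E + δ) := by
    intro δ hδ
    obtain ⟨U, hEU, hUo, hUμ⟩ := Set.exists_isOpen_lt_of_lt E (μ E + δ)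
      (ENNReal.lt_add_right (measure_ne_top μ E) hδ)
    set 𝒮 : Set (List Bool) := {s | cyl s ⊆ U ∧ μ (A ∩ cyl s) ≤ a * μ (cyl s)} with h𝒮
    set 𝒮m : Set (List Bool) := {s ∈ 𝒮 | ∀ t ∈ 𝒮, t <+: s → t = s} with h𝒮m
    -- every point of E is in a maximal cylinder
    have hcover : E ⊆ ⋃ s ∈ 𝒮m, cyl s := by
      intro β hβ
      obtain ⟨l₀, hl₀⟩ := exists_cyl_subset hUo (hEU hβ)
      obtain ⟨l, hll, hlm⟩ := (frequently_atTop.1 hβ.2) l₀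
      have hs₁ : seg β l ∈ 𝒮 :=
        ⟨(cyl_mono (seg_prefix β hll)).trans hl₀, hlm⟩
      -- find minimal prefix in 𝒮
      have hex : ∃ n, seg β n ∈ 𝒮 := ⟨l, hs₁⟩
      set n₀ := Nat.find hex with hn₀
      refine Set.mem_biUnion (show seg β n₀ ∈ 𝒮m from ?_) (mem_cyl_seg β n₀)
      refine ⟨Nat.find_spec hex, ?_⟩
      intro t ht hpre
      have htl : t.length ≤ n₀ := by simpa using hpre.length_le
      have htt : t = seg β t.length := by
        rw [List.prefix_iff_eq_take] at hpre
        conv_lhs => rw [hpre, seg_take β htl]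
      have hge : n₀ ≤ t.length := Nat.find_min' hex (htt ▸ ht)
      rw [htt, le_antisymm htl hge]
    have hdisj : 𝒮m.PairwiseDisjoint cyl := by
      intro s hs t ht hst
      rw [Function.onFun, Set.disjoint_left]
      intro x hxs hxt
      rcases le_total s.length t.length with h | h
      · exact hst (ht.2 s hs.1 (prefix_of_mem_cyl hxs hxt h))
      · exact hst ((hs.2 t ht.1 (prefix_of_mem_cyl hxt hxs h)).symm)
    have hcount : 𝒮m.Countable := Set.to_countable _
    calc μ E ≤ μ (⋃ s ∈ 𝒮m, A ∩ cyl s) := by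
          refine measure_mono fun β hβ => ?_
          obtain ⟨s, hs, hβs⟩ := Set.mem_iUnion₂.1 (hcover hβ)
          exact Set.mem_biUnion hs ⟨hEA hβ, hβs⟩
      _ = ∑' s : 𝒮m, μ (A ∩ cyl s.1) := by
          refine measure_biUnion hcount (hdisj.mono_on fun s _ => ?_) fun s _ =>
            hA.inter (measurableSet_cyl _)
          exact Set.inter_subset_right
      _ ≤ ∑' s : 𝒮m, a * μ (cyl s.1) := ENNReal.tsum_le_tsum fun s => s.2.1.2
      _ = a * ∑' s : 𝒮m, μ (cyl s.1) := ENNReal.tsum_mul_left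
      _ = a * μ (⋃ s ∈ 𝒮m, cyl s) := by
          rw [measure_biUnion hcount hdisj fun s _ => measurableSet_cyl _]
      _ ≤ a * μ U :=
          mul_le_mul_right (measure_mono (Set.iUnion₂_subset fun s hs => hs.1.1)) a
      _ ≤ a * (μ E + δ) := mul_le_mul_right hUμ.le a
  -- conclude μ E = 0
  by_contra h0
  have hfin : μ E ≠ ∞ := measure_ne_top μ E
  have hlt : a * μ E < μ E := by
    calc a * μ E < 1 * μ E := by
          exact ENNReal.mul_lt_mul_left h0 hfin ha
      _ = μ E := one_mul _
  set δ := (μ E - a * μ E) / 2 with hδdef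
  have hδ0 : δ ≠ 0 := by
    rw [hδdef]
    simp only [ne_eq, ENNReal.div_eq_zero_iff]
    push_neg
    exact ⟨by simpa [tsub_eq_zero_iff_le] using hlt.not_ge, by norm_num⟩
  have := key δ hδ0
  have hcontra : a * (μ E + δ) < μ E := by
    have h1 : a * (μ E + δ) ≤ a * μ E + δ := by
      rw [mul_add]
      gcongr
      calc a * δ ≤ 1 * δ := mul_le_mul_left ha.le δ
        _ = δ := one_mul _
    refine h1.trans_lt ?_
    rw [hδdef]
    have hsub0 : μ E - a * μ E ≠ 0 := by simpa [tsub_eq_zero_iff_le] using hlt.not_ge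
    have hsubfin : μ E - a * μ E ≠ ∞ := by
      exact ne_top_of_le_ne_top hfin tsub_le_self
    calc a * μ E + (μ E - a * μ E) / 2 < a * μ E + (μ E - a * μ E) :=
          ENNReal.add_lt_add_left (ENNReal.mul_ne_top (ha.trans_le le_top).ne hfin)
            (ENNReal.half_lt_self hsub0 hsubfin)
      _ = μ E := add_tsub_cancel_of_le hlt.le
  exact absurd this hcontra.not_ge

end Density

section Density2

variable {μ : Measure (ℕ → Bool)} (hμ : ∀ s : List Bool, μ (cyl s) = (1/2 : ℝ≥0∞) ^ s.length)

include hμ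

lemma density_ae (A : Set (ℕ → Bool)) (hA : MeasurableSet A) :
    μ {β | β ∈ A ∧ ¬ densityOne μ A β} = 0 := by
  have hak : Tendsto (fun k : ℕ => 1 - (2⁻¹ : ℝ≥0∞) ^ k) atTop (𝓝 1) := by
    have h1 : Tendsto (fun k : ℕ => ((2:ℝ≥0∞))⁻¹ ^ k) atTop (𝓝 0) :=
      ENNReal.tendsto_pow_atTop_nhds_zero_of_lt_one (by norm_num)
    simpa using ENNReal.Tendsto.sub tendsto_const_nhds h1 (Or.inl (by norm_num))
  have haklt : ∀ k : ℕ, 1 - (2⁻¹ : ℝ≥0∞) ^ k < 1 :=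
    fun k => ENNReal.sub_lt_self (by norm_num) (by norm_num) (pow_ne_zero _ (by norm_num))
  refine measure_mono_null ?_
    (measure_iUnion_null (s := fun k : ℕ =>
      {β | β ∈ A ∧ ∃ᶠ l in atTop,
        μ (A ∩ cyl (seg β l)) ≤ (1 - (2⁻¹ : ℝ≥0∞) ^ k) * μ (cyl (seg β l))})
      fun k => bad_set_null hμ A hA (haklt k))
  · intro β hβ
    by_contra hnot
    simp only [Set.mem_iUnion, not_exists, Set.mem_setOf_eq, not_and, not_frequently] at hnot
    apply hβ.2
    refine tendsto_order.2 ⟨?_, ?_⟩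
    · intro b hb
      obtain ⟨k, hk⟩ := (hak.eventually (eventually_gt_nhds hb)).exists
      filter_upwards [hnot k hβ.1] with l hl
      refine hk.trans ?_
      rw [ENNReal.lt_div_iff_mul_lt (Or.inl (cyl_ne_zero hμ _)) (Or.inl (cyl_ne_top hμ _))]
      exact lt_of_not_ge hl
    · intro b hb
      exact Eventually.of_forall fun l => (ratio_le_one hμ A _).trans_lt hb

lemma measurableSet_densityOne (A : Set (ℕ → Bool)) :
    MeasurableSet {β | densityOne μ A β} := by
  have hle : ∀ β l, μ (A ∩ cyl (seg β l)) / μ (cyl (seg β l)) ≤ 1 :=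
    fun β l => ratio_le_one hμ A _
  have heq : {β | densityOne μ A β} =
      {β | (1:ℝ≥0∞) ≤ atTop.liminf fun l => μ (A ∩ cyl (seg β l)) / μ (cyl (seg β l))} := by
    ext β
    simp only [Set.mem_setOf_eq, densityOne]
    constructor
    · intro h
      exact (h.liminf_eq).ge
    · intro h
      have hlimsup : atTop.limsup (fun l => μ (A ∩ cyl (seg β l)) / μ (cyl (seg β l))) ≤ 1 :=
        limsup_le_of_le (by isBoundedDefault) (Eventually.of_forall (hle β))
      have hll : atTop.liminf (fun l => μ (A ∩ cyl (seg β l)) / μ (cyl (seg β l))) ≤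
          atTop.limsup (fun l => μ (A ∩ cyl (seg β l)) / μ (cyl (seg β l))) :=
        liminf_le_limsup (by isBoundedDefault) (by isBoundedDefault)
      have hliminf : atTop.liminf (fun l => μ (A ∩ cyl (seg β l)) / μ (cyl (seg β l))) = 1 :=
        le_antisymm (hll.trans hlimsup) h
      exact tendsto_of_liminf_eq_limsup hliminf
        (le_antisymm hlimsup (hliminf ▸ hll))
  rw [heq]
  exact measurableSet_le measurable_const (Measurable.liminf fun l => measurable_ratio A l)

end Density2

lemma two_mul_quarter : (2:ℝ≥0∞) * 4⁻¹ = 2⁻¹ := by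
  rw [show (4:ℝ≥0∞) = 2*2 by norm_num, ENNReal.mul_inv (by norm_num) (by norm_num),
    ← mul_assoc, ENNReal.mul_inv_cancel (by norm_num) (by norm_num), one_mul]

lemma tsum_quarter_list : ∑' t : List Bool, ((4:ℝ≥0∞))⁻¹ ^ t.length = 2 := by
  calc ∑' t : List Bool, ((4:ℝ≥0∞))⁻¹ ^ t.length
      = ∑' x : Σ n : ℕ, (Fin n → Bool),
          ((4:ℝ≥0∞))⁻¹ ^ ((List.equivSigmaTuple (α := Bool)).symm x).length :=
        ((List.equivSigmaTuple (α := Bool)).symm.tsum_eq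
          fun t => ((4:ℝ≥0∞))⁻¹ ^ t.length).symm
    _ = ∑' x : Σ n : ℕ, (Fin n → Bool), ((4:ℝ≥0∞))⁻¹ ^ x.1 := by
        apply tsum_congr
        rintro ⟨n, v⟩
        simp [List.equivSigmaTuple]
    _ = ∑' n : ℕ, ∑' _v : Fin n → Bool, ((4:ℝ≥0∞))⁻¹ ^ n :=
        ENNReal.tsum_sigma fun n _ => ((4:ℝ≥0∞))⁻¹ ^ n
    _ = ∑' n : ℕ, (2:ℝ≥0∞) ^ n * ((4:ℝ≥0∞))⁻¹ ^ n := by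
        apply tsum_congr
        intro n
        rw [tsum_fintype]
        rw [Finset.sum_const, Finset.card_univ]
        simp [nsmul_eq_mul]
    _ = ∑' n : ℕ, ((2:ℝ≥0∞))⁻¹ ^ n := by
        apply tsum_congr; intro n
        rw [← mul_pow, two_mul_quarter]
    _ = 2 := by
        rw [ENNReal.tsum_geometric, ENNReal.one_sub_inv_two]
        simp

lemma tsum_quarter_prefix (p : List Bool) :
    ∑' s : {s : List Bool // p <+: s}, ((4:ℝ≥0∞))⁻¹ ^ s.1.length
      ≤ 2 * ((4:ℝ≥0∞))⁻¹ ^ p.length := by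
  have hinj : Function.Injective (fun s : {s : List Bool // p <+: s} =>
      s.1.drop p.length) := by
    rintro ⟨s, hs⟩ ⟨t, ht⟩ h
    simp only at h
    have hs' := List.prefix_iff_eq_append.1 hs
    have ht' := List.prefix_iff_eq_append.1 ht
    apply Subtype.ext
    show s = t
    rw [← hs', ← ht', h]
  calc ∑' s : {s : List Bool // p <+: s}, ((4:ℝ≥0∞))⁻¹ ^ s.1.length
      ≤ ∑' t : List Bool, ((4:ℝ≥0∞))⁻¹ ^ p.length * ((4:ℝ≥0∞))⁻¹ ^ t.length := by
        apply ENNReal.summable.tsum_le_tsum_of_inj _ hinj (fun _ _ => zero_le) _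
          ENNReal.summable
        rintro ⟨s, hs⟩
        dsimp only
        rw [← pow_add]
        apply le_of_eq
        congr 1
        rw [List.length_drop]
        have := hs.length_le
        omega
    _ = ((4:ℝ≥0∞))⁻¹ ^ p.length * ∑' t : List Bool, ((4:ℝ≥0∞))⁻¹ ^ t.length :=
        ENNReal.tsum_mul_left
    _ = 2 * ((4:ℝ≥0∞))⁻¹ ^ p.length := by rw [tsum_quarter_list, mul_comm]

/-- Lusin–Menchoff: for `F` closed, `M ⊇ F` λ-measurable with
density 1 at every point of `F`, there is a closed `C` with `F ⊆ C ⊆ M`,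
`M` of density 1 at every point of `C`, and `C` of density 1 at every point of `F`. -/
theorem lusin_menchoff
    (μ : Measure (ℕ → Bool))
    (hμ : ∀ s : List Bool, μ (cyl s) = (1/2 : ℝ≥0∞) ^ s.length)
    (F M : Set (ℕ → Bool)) (hF : IsClosed F) (hM : NullMeasurableSet M μ)
    (hFM : F ⊆ M) (hd : ∀ β ∈ F, densityOne μ M β) :
    ∃ C : Set (ℕ → Bool), IsClosed C ∧ F ⊆ C ∧ C ⊆ M ∧
      (∀ β ∈ C, densityOne μ M β) ∧ (∀ β ∈ F, densityOne μ C β) := by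
  classical
  haveI := prob_of_hμ hμ
  -- measurable core of M
  obtain ⟨M₀, hM₀M, hM₀meas, hM₀ae⟩ := hM.exists_measurable_subset_ae_eq
  have hnull1 : μ (M \ M₀) = 0 := (ae_eq_set.1 hM₀ae).2
  have hinter : ∀ X, μ (M ∩ X) = μ (M₀ ∩ X) := by
    intro X
    apply le_antisymm
    · calc μ (M ∩ X) ≤ μ ((M₀ ∩ X) ∪ (M \ M₀)) := by
            refine measure_mono fun x hx => ?_
            by_cases hx0 : x ∈ M₀
            · exact Or.inl ⟨hx0, hx.2⟩
            · exact Or.inr ⟨hx.1, hx0⟩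
        _ ≤ μ (M₀ ∩ X) + μ (M \ M₀) := measure_union_le _ _
        _ = μ (M₀ ∩ X) := by rw [hnull1, add_zero]
    · exact measure_mono (Set.inter_subset_inter_left X hM₀M)
  have hdensEq : ∀ N, densityOne μ M N ↔ densityOne μ M₀ N := by
    intro N
    unfold densityOne
    have : (fun l => μ (M ∩ cyl (seg N l)) / μ (cyl (seg N l))) =
        fun l => μ (M₀ ∩ cyl (seg N l)) / μ (cyl (seg N l)) :=
      funext fun l => by rw [hinter]
    rw [this]
  set D := {β | densityOne μ M β} with hDdef
  have hDmeas : MeasurableSet D := by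
    have : D = {β | densityOne μ M₀ β} := Set.ext fun β => hdensEq β
    rw [this]
    exact measurableSet_densityOne hμ M₀
  have hMD : μ (M₀ \ D) = 0 := by
    refine measure_mono_null ?_ (density_ae hμ M₀ hM₀meas)
    rintro β ⟨h1, h2⟩
    exact ⟨h1, fun hc => h2 ((hdensEq β).2 hc)⟩
  -- maximal cylinders in the complement of F
  set S : Set (List Bool) := {s | cyl s ∩ F = ∅ ∧ ∀ t, t <+: s → t ≠ s → cyl t ∩ F ≠ ∅}
    with hSdef
  have hcoverS : ∀ x, x ∉ F → ∃ s ∈ S, x ∈ cyl s := by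
    intro x hx
    obtain ⟨l, hl⟩ := exists_cyl_subset hF.isOpen_compl (by exact hx : x ∈ Fᶜ)
    have hex : ∃ n, cyl (seg x n) ∩ F = ∅ := by
      refine ⟨l, Set.eq_empty_of_subset_empty fun y hy => hl hy.1 hy.2⟩
    refine ⟨seg x (Nat.find hex), ⟨Nat.find_spec hex, ?_⟩, mem_cyl_seg x _⟩
    intro t hpre hne
    have htl : t.length ≤ Nat.find hex := by simpa using hpre.length_le
    have htt : t = seg x t.length := by
      conv_lhs => rw [List.prefix_iff_eq_take.1 hpre, seg_take x htl]
    have hlt : t.length < Nat.find hex := by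
      rcases lt_or_eq_of_le htl with h | h
      · exact h
      · exact absurd (hpre.eq_of_length (by simp [h])) hne
    have := Nat.find_min hex hlt
    rw [htt]
    exact this
  have hSd : ∀ s ∈ S, ∀ t ∈ S, s ≠ t → cyl s ∩ cyl t = ∅ := by
    intro s hs t ht hst
    by_contra hne
    obtain ⟨x, hxs, hxt⟩ := Set.nonempty_iff_ne_empty.2 hne
    rcases le_total s.length t.length with h | h
    · have hpre : s <+: t := prefix_of_mem_cyl hxs hxt h
      rcases eq_or_ne s t with h' | h'
      · exact hst h'
      · exact (ht.2 s hpre h') hs.1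
    · have hpre : t <+: s := prefix_of_mem_cyl hxt hxs h
      rcases eq_or_ne t s with h' | h'
      · exact hst h'.symm
      · exact (hs.2 t hpre h') ht.1
  -- choose closed pieces inside M₀ ∩ D ∩ cyl s
  have hKex : ∀ s : List Bool, s ∈ S → ∃ K, K ⊆ M₀ ∩ D ∩ cyl s ∧ IsClosed K ∧
      μ (M₀ ∩ D ∩ cyl s) < μ K + (4:ℝ≥0∞)⁻¹ ^ s.length := by
    intro s _
    obtain ⟨K, hK1, hK2, hK3⟩ := MeasurableSet.exists_isClosed_lt_add
      ((hM₀meas.inter hDmeas).inter (measurableSet_cyl s)) (measure_ne_top μ _)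
      (pow_ne_zero s.length (by norm_num : ((4:ℝ≥0∞))⁻¹ ≠ 0))
    exact ⟨K, hK1, hK2, hK3⟩
  choose K hK1 hK2 hK3 using hKex
  set C := F ∪ ⋃ (s : List Bool) (h : s ∈ S), K s h with hCdef
  -- error bound for each piece
  have herr : ∀ (s : List Bool) (h : s ∈ S), μ ((M ∩ cyl s) \ K s h) ≤ (4:ℝ≥0∞)⁻¹ ^ s.length := by
    intro s h
    have hsub : (M ∩ cyl s) \ K s h ⊆
        ((M₀ ∩ D ∩ cyl s) \ K s h) ∪ ((M \ M₀) ∪ (M₀ \ D)) := by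
      rintro x ⟨⟨hxM, hxc⟩, hxK⟩
      by_cases hx0 : x ∈ M₀
      · by_cases hxD : x ∈ D
        · exact Or.inl ⟨⟨⟨hx0, hxD⟩, hxc⟩, hxK⟩
        · exact Or.inr (Or.inr ⟨hx0, hxD⟩)
      · exact Or.inr (Or.inl ⟨hxM, hx0⟩)
    calc μ ((M ∩ cyl s) \ K s h)
        ≤ μ (((M₀ ∩ D ∩ cyl s) \ K s h) ∪ ((M \ M₀) ∪ (M₀ \ D))) := measure_mono hsub
      _ ≤ μ ((M₀ ∩ D ∩ cyl s) \ K s h) + μ ((M \ M₀) ∪ (M₀ \ D)) := measure_union_le _ _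
      _ = μ ((M₀ ∩ D ∩ cyl s) \ K s h) := by
          rw [measure_union_null hnull1 hMD, add_zero]
      _ = μ (M₀ ∩ D ∩ cyl s) - μ (K s h) := by
          rw [measure_diff (hK1 s h) (hK2 s h).measurableSet.nullMeasurableSet
            (measure_ne_top μ _)]
      _ ≤ (4:ℝ≥0∞)⁻¹ ^ s.length := by
          rw [tsub_le_iff_right, add_comm]
          exact (hK3 s h).le
  refine ⟨C, ?_, Set.subset_union_left, ?_, ?_, ?_⟩
  -- C is closed
  · rw [← isOpen_compl_iff]
    rw [isOpen_iff_forall_mem_open]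
    intro x hx
    simp only [hCdef, Set.mem_compl_iff, Set.mem_union, Set.mem_iUnion, not_or, not_exists] at hx
    obtain ⟨hxF, hxK⟩ := hx
    obtain ⟨s₀, hs₀, hxs₀⟩ := hcoverS x hxF
    refine ⟨cyl s₀ \ K s₀ hs₀, ?_, (isOpen_cyl s₀).sdiff (hK2 s₀ hs₀), ⟨hxs₀, hxK s₀ hs₀⟩⟩
    rintro y ⟨hyc, hyK⟩
    simp only [hCdef, Set.mem_compl_iff, Set.mem_union, Set.mem_iUnion, not_or, not_exists]
    constructor
    · intro hyF
      exact Set.eq_empty_iff_forall_notMem.1 hs₀.1 y ⟨hyc, hyF⟩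
    · intro s hs hyKs
      rcases eq_or_ne s s₀ with h | h
      · subst h; exact hyK hyKs
      · have := hSd s hs s₀ hs₀ h
        have hys : y ∈ cyl s := (hK1 s hs hyKs).2
        exact Set.eq_empty_iff_forall_notMem.1 this y ⟨hys, hyc⟩
  -- C ⊆ M
  · rintro x (hxF | hxK)
    · exact hFM hxF
    · simp only [Set.mem_iUnion] at hxK
      obtain ⟨s, hs, hxs⟩ := hxK
      exact hM₀M (hK1 s hs hxs).1.1
  -- density of M at points of C
  · rintro β (hβF | hβK)
    · exact hd β hβF
    · simp only [Set.mem_iUnion] at hβK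
      obtain ⟨s, hs, hβs⟩ := hβK
      exact (hK1 s hs hβs).1.2
  -- density of C at points of F
  · intro β hβF
    have key : ∀ l, μ (M ∩ cyl (seg β l)) ≤ μ (C ∩ cyl (seg β l)) + 2 * (4:ℝ≥0∞)⁻¹ ^ l := by
      intro l
      set p := seg β l with hp
      have hincl : M ∩ cyl p ⊆ (C ∩ cyl p) ∪
          ⋃ s : {s : List Bool // s ∈ S ∧ p <+: s}, ((M ∩ cyl s.1) \ K s.1 s.2.1) := by
        intro x hx
        by_cases hxC : x ∈ C
        · exact Or.inl ⟨hxC, hx.2⟩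
        · have hxF : x ∉ F := fun h => hxC (Or.inl h)
          obtain ⟨s, hs, hxs⟩ := hcoverS x hxF
          have hxK : x ∉ K s hs := by
            intro h
            exact hxC (Or.inr (Set.mem_iUnion.2 ⟨s, Set.mem_iUnion.2 ⟨hs, h⟩⟩))
          have hps : p <+: s := by
            rcases le_total s.length p.length with h | h
            · exfalso
              have hpre : s <+: p := prefix_of_mem_cyl hxs hx.2 h
              have : β ∈ cyl s := cyl_mono hpre (mem_cyl_seg β l)
              exact Set.eq_empty_iff_forall_notMem.1 hs.1 β ⟨this, hβF⟩
            · exact prefix_of_mem_cyl hx.2 hxs h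
          exact Or.inr (Set.mem_iUnion.2 ⟨⟨s, hs, hps⟩, ⟨hx.1, hxs⟩, hxK⟩)
      calc μ (M ∩ cyl p)
          ≤ μ ((C ∩ cyl p) ∪
            ⋃ s : {s : List Bool // s ∈ S ∧ p <+: s}, ((M ∩ cyl s.1) \ K s.1 s.2.1)) :=
            measure_mono hincl
        _ ≤ μ (C ∩ cyl p) +
            μ (⋃ s : {s : List Bool // s ∈ S ∧ p <+: s}, ((M ∩ cyl s.1) \ K s.1 s.2.1)) :=
            measure_union_le _ _
        _ ≤ μ (C ∩ cyl p) +
            ∑' s : {s : List Bool // s ∈ S ∧ p <+: s}, μ ((M ∩ cyl s.1) \ K s.1 s.2.1) := by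
            gcongr
            exact measure_iUnion_le _
        _ ≤ μ (C ∩ cyl p) + ∑' s : {s : List Bool // s ∈ S ∧ p <+: s},
              (4:ℝ≥0∞)⁻¹ ^ s.1.length := by
            gcongr with s
            exact herr s.1 s.2.1
        _ ≤ μ (C ∩ cyl p) + ∑' s : {s : List Bool // p <+: s}, (4:ℝ≥0∞)⁻¹ ^ s.1.length := by
            gcongr
            refine ENNReal.summable.tsum_le_tsum_of_inj
              (fun s : {s : List Bool // s ∈ S ∧ p <+: s} => (⟨s.1, s.2.2⟩ : {s // p <+: s}))
              (fun a b hab => Subtype.ext (by simpa using congrArg Subtype.val hab))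
              (fun _ _ => zero_le) (fun s => le_rfl) ENNReal.summable
        _ ≤ μ (C ∩ cyl p) + 2 * (4:ℝ≥0∞)⁻¹ ^ l := by
            gcongr
            have := tsum_quarter_prefix p
            rwa [hp, seg_length] at this
    -- pass to ratios
    have hrr : ∀ l, μ (M ∩ cyl (seg β l)) / μ (cyl (seg β l)) - 2 * (2:ℝ≥0∞)⁻¹ ^ l ≤
        μ (C ∩ cyl (seg β l)) / μ (cyl (seg β l)) := by
      intro l
      rw [tsub_le_iff_right]
      have hc0 := cyl_ne_zero hμ (seg β l)
      have hct := cyl_ne_top hμ (seg β l)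
      have h2 : (2:ℝ≥0∞) * (2:ℝ≥0∞)⁻¹ ^ l = (2 * (4:ℝ≥0∞)⁻¹ ^ l) / μ (cyl (seg β l)) := by
        rw [hμ, seg_length, one_div]
        have h4 : (2:ℝ≥0∞)⁻¹ * 2⁻¹ = 4⁻¹ := by
          rw [← ENNReal.mul_inv (by norm_num) (by norm_num)]; norm_num
        rw [ENNReal.eq_div_iff (pow_ne_zero _ (by norm_num))
          (ENNReal.pow_ne_top (by norm_num)), mul_comm, mul_assoc, ← mul_pow, h4]
      rw [h2, ENNReal.div_add_div_same]
      exact ENNReal.div_le_div_right (key l) _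
    have hlow : Tendsto (fun l => μ (M ∩ cyl (seg β l)) / μ (cyl (seg β l))
        - 2 * (2:ℝ≥0∞)⁻¹ ^ l) atTop (𝓝 1) := by
      have h1 : Tendsto (fun l : ℕ => 2 * (2:ℝ≥0∞)⁻¹ ^ l) atTop (𝓝 0) := by
        have := ENNReal.tendsto_pow_atTop_nhds_zero_of_lt_one
          (show (2:ℝ≥0∞)⁻¹ < 1 by norm_num)
        simpa using ENNReal.Tendsto.const_mul this (Or.inr (by norm_num))
      simpa using ENNReal.Tendsto.sub (hd β hβF) h1 (Or.inl (by norm_num))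
    exact tendsto_of_tendsto_of_tendsto_of_le_of_le hlow tendsto_const_nhds hrr
      fun l => ratio_le_one hμ C (seg β l)
end

section
/- (Urysohn-type lemma for the density topology) Let C be a closed subset of 2^ω and G a Gδ subset of 2^ω disjoint from C with λ(G) = 0. Then there is a λ-measurable, lower semicontinuous function h : 2^ω → [0,1] such that h ≡ 0 on C, h ≡ 1 on G, and h is approximately continuous at every point: for every β ∈ 2^ω and every ε > 0, the set {γ ∈ 2^ω : |h(γ) − h(β)| < ε} has density 1 at β. -/
open MeasureTheory Filter Topology
open scoped ENNReal

namespace ZahorskiAux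

local notation "X" => (ℕ → Bool)


@[simp] lemma seg_length (β : X) (l : ℕ) : (seg β l).length = l := by
  simp [seg]

lemma mem_cyl_seg {γ β : X} {l : ℕ} : γ ∈ cyl (seg β l) ↔ ∀ i < l, γ i = β i := by
  simp only [cyl, seg, Set.mem_setOf_eq]
  constructor
  · intro h i hi
    have := h ⟨i, by simpa using hi⟩
    simpa using this
  · intro h i
    have hi : (i : ℕ) < l := by
      have := i.2; simpa using this
    simpa using h i hi

lemma self_mem_cyl_seg (β : X) (l : ℕ) : β ∈ cyl (seg β l) :=
  mem_cyl_seg.2 (fun _ _ => rfl)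

lemma cyl_seg_anti {β : X} {l l' : ℕ} (h : l ≤ l') : cyl (seg β l') ⊆ cyl (seg β l) := by
  intro γ hγ
  rw [mem_cyl_seg] at *
  exact fun i hi => hγ i (lt_of_lt_of_le hi h)

lemma seg_eq_of_mem {γ : X} {s : List Bool} (h : γ ∈ cyl s) : seg γ s.length = s := by
  apply List.ext_get (by simp)
  intro i h1 h2
  have := h ⟨i, h2⟩
  simp only [seg] at *
  rw [List.get_ofFn]
  simpa using this

lemma seg_agree {γ β : X} {l m : ℕ} (h : γ ∈ cyl (seg β l)) (hm : m ≤ l) :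
    seg γ m = seg β m := by
  apply List.ext_get (by simp)
  intro i h1 h2
  simp only [seg, List.get_ofFn]
  have : (i : ℕ) < l := lt_of_lt_of_le (by simpa using h1) hm
  simpa using (mem_cyl_seg.1 h) i this

@[simp] lemma cyl_nil : cyl ([] : List Bool) = Set.univ := by
  ext β; simp [cyl]

@[simp] lemma seg_zero (β : X) : seg β 0 = [] := by simp [seg]

lemma isOpen_cyl (s : List Bool) : IsOpen (cyl s) := by
  have : cyl s = ⋂ i : Fin s.length, (fun β : X => β i) ⁻¹' {s.get i} := by
    ext β; simp [cyl]
  rw [this]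
  exact isOpen_iInter_of_finite fun i =>
    (continuous_apply (i : ℕ)).isOpen_preimage _ (isOpen_discrete _)

lemma isClosed_cyl (s : List Bool) : IsClosed (cyl s) := by
  have : cyl s = ⋂ i : Fin s.length, (fun β : X => β i) ⁻¹' {s.get i} := by
    ext β; simp [cyl]
  rw [this]
  exact isClosed_iInter fun i =>
    (IsClosed.preimage (continuous_apply (i : ℕ)) isClosed_singleton)

lemma measurableSet_cyl (s : List Bool) : MeasurableSet (cyl s) :=
  (isOpen_cyl s).measurableSet

lemma exists_cylseg_subset {U : Set X} (hU : IsOpen U) {β : X} (hβ : β ∈ U) :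
    ∃ l, cyl (seg β l) ⊆ U := by
  rw [isOpen_pi_iff] at hU
  obtain ⟨I, u, h1, h2⟩ := hU β hβ
  refine ⟨I.sup id + 1, fun γ hγ => h2 ?_⟩
  intro i hi
  have hlt : i < I.sup id + 1 := Nat.lt_succ_of_le (Finset.le_sup (f := id) hi)
  rw [mem_cyl_seg.1 hγ i hlt]
  exact (h1 i hi).2

-- cylinders are comparable or disjoint
lemma cyl_subset_of_le {s t : List Bool} {γ : X} (hs : γ ∈ cyl s) (ht : γ ∈ cyl t)
    (h : s.length ≤ t.length) : cyl t ⊆ cyl s := by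
  have h1 : seg γ s.length = s := seg_eq_of_mem hs
  have h2 : seg γ t.length = t := seg_eq_of_mem ht
  rw [← h1, ← h2]
  exact cyl_seg_anti h

section Meas

variable {μ : Measure X} (hμ : ∀ s : List Bool, μ (cyl s) = (1/2 : ℝ≥0∞) ^ s.length)

include hμ

lemma μcyl_ne_zero (s : List Bool) : μ (cyl s) ≠ 0 := by
  rw [hμ]; exact pow_ne_zero _ (by norm_num)

lemma μcyl_ne_top (s : List Bool) : μ (cyl s) ≠ ⊤ := by
  rw [hμ]; exact ENNReal.pow_ne_top (by norm_num)

lemma μ_univ_eq_one : μ Set.univ = 1 := by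
  have := hμ []
  simpa using this

omit hμ in
lemma isFiniteMeasure (μ : Measure X) (hμ' : ∀ s : List Bool, μ (cyl s) = (1/2 : ℝ≥0∞) ^ s.length) :
    IsFiniteMeasure μ :=
  ⟨by rw [μ_univ_eq_one hμ']; norm_num⟩

end Meas


section D
variable {μ : Measure X} (hμ : ∀ s : List Bool, μ (cyl s) = (1/2 : ℝ≥0∞) ^ s.length)
include hμ

lemma rat_le_one (S : Set X) (s : List Bool) : μ (S ∩ cyl s) / μ (cyl s) ≤ 1 := by
  rw [ENNReal.div_le_iff (μcyl_ne_zero hμ s) (μcyl_ne_top hμ s), one_mul]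
  exact measure_mono Set.inter_subset_right

lemma rat_add_compl {S : Set X} (hS : MeasurableSet S) (s : List Bool) :
    μ (S ∩ cyl s) / μ (cyl s) + μ (cyl s \ S) / μ (cyl s) = 1 := by
  rw [← ENNReal.add_div]
  rw [Set.inter_comm, measure_inter_add_diff _ hS]
  exact ENNReal.div_self (μcyl_ne_zero hμ s) (μcyl_ne_top hμ s)

lemma densityOne_iff {S : Set X} (hS : MeasurableSet S) {β : X} :
    densityOne μ S β ↔
      Tendsto (fun l : ℕ => μ (cyl (seg β l) \ S) / μ (cyl (seg β l))) atTop (𝓝 0) := by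
  set a : ℕ → ℝ≥0∞ := fun l => μ (S ∩ cyl (seg β l)) / μ (cyl (seg β l)) with ha
  set b : ℕ → ℝ≥0∞ := fun l => μ (cyl (seg β l) \ S) / μ (cyl (seg β l)) with hb
  have hab : ∀ l, a l + b l = 1 := fun l => rat_add_compl hμ hS _
  have hane : ∀ l, a l ≠ ⊤ := fun l => by
    intro h
    have := hab l
    rw [h] at this
    simp at this
  have hbne : ∀ l, b l ≠ ⊤ := fun l => by
    intro h
    have := hab l
    rw [h] at this
    simp at this
  have hba : ∀ l, b l = 1 - a l := fun l => ENNReal.eq_sub_of_add_eq (hane l)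
    (by rw [add_comm]; exact hab l)
  have hab' : ∀ l, a l = 1 - b l := fun l => ENNReal.eq_sub_of_add_eq (hbne l) (hab l)
  have hc : Continuous (fun x : ℝ≥0∞ => 1 - x) := ENNReal.continuous_sub_left ENNReal.one_ne_top
  constructor
  · intro h
    have : Tendsto (fun l => 1 - a l) atTop (𝓝 (1 - 1)) := (hc.tendsto 1).comp h
    simp only [tsub_self] at this
    exact this.congr (fun l => (hba l).symm)
  · intro h
    have : Tendsto (fun l => 1 - b l) atTop (𝓝 (1 - 0)) := (hc.tendsto 0).comp h
    simp only [tsub_zero] at this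
    exact this.congr (fun l => (hab' l).symm)

lemma densityOne_of_le {S : Set X} (hS : MeasurableSet S) {β : X} {g : ℕ → ℝ≥0∞}
    (hle : ∀ᶠ l in atTop, μ (cyl (seg β l) \ S) / μ (cyl (seg β l)) ≤ g l)
    (hg : Tendsto g atTop (𝓝 0)) : densityOne μ S β := by
  rw [densityOne_iff hμ hS]
  exact tendsto_of_tendsto_of_tendsto_of_le_of_le' tendsto_const_nhds hg
    (Eventually.of_forall (fun l => zero_le)) hle

lemma densityOne_univ (β : X) : densityOne μ Set.univ β := by
  have : ∀ l : ℕ, μ (Set.univ ∩ cyl (seg β l)) / μ (cyl (seg β l)) = 1 := fun l => by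
    rw [Set.univ_inter]
    exact ENNReal.div_self (μcyl_ne_zero hμ _) (μcyl_ne_top hμ _)
  exact Tendsto.congr (fun l => (this l).symm) tendsto_const_nhds

lemma densityOne_squeeze {M D : Set X} {β : X} (hD : densityOne μ D β) (l₀ : ℕ)
    (hsub : ∀ l, l₀ ≤ l → D ∩ cyl (seg β l) ⊆ M ∩ cyl (seg β l)) :
    densityOne μ M β := by
  refine tendsto_of_tendsto_of_tendsto_of_le_of_le' hD tendsto_const_nhds ?_ ?_
  · filter_upwards [eventually_ge_atTop l₀] with l hl
    exact ENNReal.div_le_div_right (measure_mono (hsub l hl)) _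
  · exact Eventually.of_forall (fun l => rat_le_one hμ M _)


end D

section L1
variable {μ : Measure X} (hμ : ∀ s : List Bool, μ (cyl s) = (1/2 : ℝ≥0∞) ^ s.length)

/-- The set of minimal nodes along branches where `P` first holds. -/
def minNodes (P : List Bool → Prop) : Set (List Bool) :=
  {s | ∃ β l, s = seg β l ∧ P (seg β l) ∧ ∀ m < l, ¬ P (seg β m)}

lemma minNodes_disjoint (P : List Bool → Prop) :
    (minNodes P).Pairwise (fun s t => Disjoint (cyl s) (cyl t)) := by
  rintro s hs t ht hst
  rw [Set.disjoint_left]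
  intro γ hγs hγt
  obtain ⟨β, l, rfl, hP, hmin⟩ := hs
  obtain ⟨β', l', rfl, hP', hmin'⟩ := ht
  have h1 : seg γ l = seg β l := by
    have := seg_eq_of_mem hγs; rwa [seg_length] at this
  have h2 : seg γ l' = seg β' l' := by
    have := seg_eq_of_mem hγt; rwa [seg_length] at this
  rcases lt_trichotomy l l' with h | h | h
  · exact hmin' l h (by
      rw [← seg_agree hγt (le_of_lt h), h1]; exact hP)
  · exact hst (by rw [← h1, h, h2])
  · exact hmin l' h (by
      rw [← seg_agree hγs (le_of_lt h), h2]; exact hP')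

lemma mem_minNodes_union {P : List Bool → Prop} {β : X} (h : ∃ l, P (seg β l)) :
    ∃ s ∈ minNodes P, β ∈ cyl s := by
  classical
  have hl := Nat.find_spec h
  refine ⟨seg β (Nat.find h), ⟨β, Nat.find h, rfl, hl, fun m hm => Nat.find_min h hm⟩,
    self_mem_cyl_seg β _⟩

/-- Hardy–Littlewood style maximal inequality for cylinders. -/
lemma maximal (E : Set X) (hE : MeasurableSet E) (c : ℝ≥0∞) :
    c * μ {β | ∃ l, c * μ (cyl (seg β l)) ≤ μ (E ∩ cyl (seg β l))} ≤ μ E := by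
  classical
  set P : List Bool → Prop := fun s => c * μ (cyl s) ≤ μ (E ∩ cyl s) with hP
  set T := minNodes P with hT
  have hTc : T.Countable := Set.to_countable _
  haveI : Countable ↥T := hTc.to_subtype
  have hsub : {β | ∃ l, c * μ (cyl (seg β l)) ≤ μ (E ∩ cyl (seg β l))} ⊆
      ⋃ t : T, cyl (t : List Bool) := by
    intro β hβ
    obtain ⟨s, hs, hβs⟩ := mem_minNodes_union (P := P) hβ
    exact Set.mem_iUnion.2 ⟨⟨s, hs⟩, hβs⟩
  have hdisj : Pairwise (Function.onFun Disjoint fun t : T => cyl (t : List Bool)) := by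
    rintro ⟨s, hs⟩ ⟨t, ht⟩ hst
    exact minNodes_disjoint P hs ht (fun h => hst (Subtype.ext h))
  have hdisjE : Pairwise (Function.onFun Disjoint fun t : T => E ∩ cyl (t : List Bool)) := by
    intro t t' htt'
    exact (hdisj htt').mono Set.inter_subset_right Set.inter_subset_right
  calc c * μ {β | ∃ l, c * μ (cyl (seg β l)) ≤ μ (E ∩ cyl (seg β l))}
      ≤ c * μ (⋃ t : T, cyl (t : List Bool)) := by
        exact mul_le_mul_right (measure_mono hsub) c
    _ ≤ c * ∑' t : T, μ (cyl (t : List Bool)) := mul_le_mul_right (measure_iUnion_le _) c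
    _ = ∑' t : T, c * μ (cyl (t : List Bool)) := (ENNReal.tsum_mul_left).symm
    _ ≤ ∑' t : T, μ (E ∩ cyl (t : List Bool)) := by
        refine ENNReal.tsum_le_tsum ?_
        rintro ⟨s, hs⟩
        obtain ⟨β, l, rfl, hPs, -⟩ := hs
        exact hPs
    _ = μ (⋃ t : T, E ∩ cyl (t : List Bool)) :=
        (measure_iUnion hdisjE (fun t => hE.inter (measurableSet_cyl _))).symm
    _ ≤ μ E := measure_mono (Set.iUnion_subset fun t => Set.inter_subset_left)

lemma measurableSet_segLevel (p : List Bool → Prop) (l : ℕ) :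
    MeasurableSet {β : X | p (seg β l)} := by
  have : {β : X | p (seg β l)} = ⋃ s : {s : List Bool // s.length = l ∧ p s}, cyl (s : List Bool) := by
    ext β
    simp only [Set.mem_setOf_eq, Set.mem_iUnion]
    constructor
    · intro h
      exact ⟨⟨seg β l, seg_length β l, h⟩, self_mem_cyl_seg β l⟩
    · rintro ⟨⟨s, hlen, hp⟩, hβ⟩
      have : seg β l = s := by
        have h2 := seg_eq_of_mem (s := s) hβ
        rwa [hlen] at h2
      rwa [this]
  rw [this]
  haveI : Countable {s : List Bool // s.length = l ∧ p s} :=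
    (Set.to_countable _).to_subtype
  exact MeasurableSet.iUnion (fun s => measurableSet_cyl _)

include hμ

/-- The dyadic Lebesgue density theorem: a.e. point of a measurable set is a density point. -/
lemma density_ae {S : Set X} (hS : MeasurableSet S) :
    ∃ B : Set X, MeasurableSet B ∧ μ B = 0 ∧ ∀ β ∈ S, β ∉ B → densityOne μ S β := by
  classical
  haveI := isFiniteMeasure μ hμ
  set bad : ℕ → Set X := fun m =>
    {β | ∀ L, ∃ l, L ≤ l ∧ ((m : ℝ≥0∞) + 1)⁻¹ * μ (cyl (seg β l)) ≤ μ (cyl (seg β l) \ S)}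
    with hbad
  have hbadm : ∀ m, MeasurableSet (bad m) := by
    intro m
    have : bad m = ⋂ L : ℕ, ⋃ l : ℕ, ⋃ (_ : L ≤ l),
        {β : X | ((m : ℝ≥0∞) + 1)⁻¹ * μ (cyl (seg β l)) ≤ μ (cyl (seg β l) \ S)} := by
      ext β
      simp only [hbad, Set.mem_setOf_eq, Set.mem_iInter, Set.mem_iUnion]
      constructor
      · intro h L; obtain ⟨l, h1, h2⟩ := h L; exact ⟨l, h1, h2⟩
      · intro h L; obtain ⟨l, h1, h2⟩ := h L; exact ⟨l, h1, h2⟩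
    rw [this]
    refine MeasurableSet.iInter fun L => MeasurableSet.iUnion fun l =>
      MeasurableSet.iUnion fun _ => ?_
    exact measurableSet_segLevel
      (fun s => ((m : ℝ≥0∞) + 1)⁻¹ * μ (cyl s) ≤ μ (cyl s \ S)) l
  -- each S ∩ bad m is null
  have hnull : ∀ m, μ (S ∩ bad m) = 0 := by
    intro m
    have key : ∀ ε : ℝ≥0∞, ε ≠ 0 → μ (S ∩ bad m) ≤ ((m : ℝ≥0∞) + 1) * ε := by
      intro ε hε
      obtain ⟨U, hSU, hUopen, -, hUS⟩ :=
        hS.exists_isOpen_diff_lt (measure_ne_top μ S) hε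
      -- S ∩ bad m ⊆ maximal set of U \ S
      have hsub : S ∩ bad m ⊆
          {β | ∃ l, ((m : ℝ≥0∞) + 1)⁻¹ * μ (cyl (seg β l)) ≤ μ ((U \ S) ∩ cyl (seg β l))} := by
        rintro β ⟨hβS, hβbad⟩
        obtain ⟨l₁, hl₁⟩ := exists_cylseg_subset hUopen (hSU hβS)
        obtain ⟨l, hll₁, hdrop⟩ := hβbad l₁
        refine ⟨l, le_trans hdrop (measure_mono ?_)⟩
        intro γ hγ
        have hγU : γ ∈ U := hl₁ (cyl_seg_anti hll₁ hγ.1)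
        exact ⟨⟨hγU, hγ.2⟩, hγ.1⟩
      have hmax := maximal (μ := μ) (U \ S) (hUopen.measurableSet.diff hS)
        ((m : ℝ≥0∞) + 1)⁻¹
      have h1 : ((m : ℝ≥0∞) + 1)⁻¹ * μ (S ∩ bad m) ≤ ε := by
        refine le_trans (mul_le_mul_right (measure_mono hsub) _) (le_trans hmax hUS.le)
      -- multiply both sides by (m+1)
      have hm1 : ((m : ℝ≥0∞) + 1) ≠ 0 := by
        simp
      have hm2 : ((m : ℝ≥0∞) + 1) ≠ ⊤ := by
        exact ENNReal.add_ne_top.2 ⟨ENNReal.natCast_ne_top m, ENNReal.one_ne_top⟩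
      calc μ (S ∩ bad m) = ((m : ℝ≥0∞) + 1) * (((m : ℝ≥0∞) + 1)⁻¹ * μ (S ∩ bad m)) := by
            rw [← mul_assoc, ENNReal.mul_inv_cancel hm1 hm2, one_mul]
        _ ≤ ((m : ℝ≥0∞) + 1) * ε := mul_le_mul_right h1 _
    -- conclude nullity
    refine le_antisymm ?_ (zero_le)
    refine ENNReal.le_of_forall_pos_le_add fun δ hδ _ => ?_
    rw [zero_add]
    have hm2 : ((m : ℝ≥0∞) + 1) ≠ ⊤ := by
      exact ENNReal.add_ne_top.2 ⟨ENNReal.natCast_ne_top m, ENNReal.one_ne_top⟩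
    have hm1 : ((m : ℝ≥0∞) + 1) ≠ 0 := by simp
    have hδ' : (δ : ℝ≥0∞) / ((m : ℝ≥0∞) + 1) ≠ 0 := by
      simp only [ne_eq, ENNReal.div_eq_zero_iff, not_or]
      exact ⟨by exact_mod_cast hδ.ne', hm2⟩
    have := key _ hδ'
    calc μ (S ∩ bad m) ≤ ((m : ℝ≥0∞) + 1) * ((δ : ℝ≥0∞) / ((m : ℝ≥0∞) + 1)) := this
      _ = δ := ENNReal.mul_div_cancel hm1 hm2
  refine ⟨⋃ m : ℕ, S ∩ bad m, MeasurableSet.iUnion (fun m => hS.inter (hbadm m)),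
    measure_iUnion_null hnull, ?_⟩
  intro β hβS hβB
  rw [densityOne_iff hμ hS]
  rw [ENNReal.tendsto_atTop_zero]
  intro ε hε
  obtain ⟨n, hn⟩ := ENNReal.exists_inv_nat_lt hε.ne'
  have hβbad : β ∉ bad n := by
    intro h
    exact hβB (Set.mem_iUnion.2 ⟨n, hβS, h⟩)
  simp only [hbad, Set.mem_setOf_eq, not_forall, not_exists, not_and, not_le] at hβbad
  obtain ⟨L, hL⟩ := hβbad
  refine ⟨L, fun l hl => ?_⟩
  have hdrop := hL l hl
  rw [ENNReal.div_le_iff (μcyl_ne_zero hμ _) (μcyl_ne_top hμ _)]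
  calc μ (cyl (seg β l) \ S) ≤ ((n : ℝ≥0∞) + 1)⁻¹ * μ (cyl (seg β l)) := hdrop.le
    _ ≤ (n : ℝ≥0∞)⁻¹ * μ (cyl (seg β l)) := by
        refine mul_le_mul_left (ENNReal.inv_le_inv.2 (le_add_of_nonneg_right zero_le_one)) _
    _ ≤ ε * μ (cyl (seg β l)) := mul_le_mul_left hn.le _

end L1

section TC
variable {μ : Measure X} (hμ : ∀ s : List Bool, μ (cyl s) = (1/2 : ℝ≥0∞) ^ s.length)

/-- boundary nodes of a closed set F : minimal cylinders disjoint from F -/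
def bdryNodes (F : Set X) : Set (List Bool) :=
  {s | ∃ β l, s = seg β (l + 1) ∧ cyl (seg β (l + 1)) ∩ F = ∅ ∧ cyl (seg β l) ∩ F ≠ ∅}

lemma bdryNodes_spec {F : Set X} {s : List Bool} (h : s ∈ bdryNodes F) :
    cyl s ∩ F = ∅ := by
  obtain ⟨β, l, rfl, he, -⟩ := h
  exact he

lemma bdryNodes_disjoint (F : Set X) :
    (bdryNodes F).Pairwise (fun s t => Disjoint (cyl s) (cyl t)) := by
  rintro s hs t ht hst
  rw [Set.disjoint_left]
  intro γ hγs hγt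
  obtain ⟨β, l, rfl, he, hne⟩ := hs
  obtain ⟨β', l', rfl, he', hne'⟩ := ht
  have h1 : seg γ (l + 1) = seg β (l + 1) := by
    have := seg_eq_of_mem hγs; rwa [seg_length] at this
  have h2 : seg γ (l' + 1) = seg β' (l' + 1) := by
    have := seg_eq_of_mem hγt; rwa [seg_length] at this
  rcases lt_trichotomy l l' with h | h | h
  · apply hne'
    rw [← seg_agree hγt (Nat.le_succ l')]
    rw [Set.eq_empty_iff_forall_notMem] at he ⊢
    intro x hx
    refine he x ⟨?_, hx.2⟩
    have hsub : cyl (seg γ l') ⊆ cyl (seg γ (l + 1)) := cyl_seg_anti h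
    rw [h1] at hsub
    exact hsub hx.1
  · exact hst (by rw [← h1, h, h2])
  · apply hne
    rw [← seg_agree hγs (Nat.le_succ l)]
    rw [Set.eq_empty_iff_forall_notMem] at he' ⊢
    intro x hx
    refine he' x ⟨?_, hx.2⟩
    have hsub : cyl (seg γ l) ⊆ cyl (seg γ (l' + 1)) := cyl_seg_anti h
    rw [h2] at hsub
    exact hsub hx.1

include hμ

lemma thinCover {F Z : Set X} (hF : IsClosed F) (hFne : F.Nonempty) (hZ0 : μ Z = 0) :
    ∃ U : Set X, IsOpen U ∧ Z \ F ⊆ U ∧ ∀ β ∈ F,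
      Tendsto (fun l => μ (U ∩ cyl (seg β l)) / μ (cyl (seg β l))) atTop (𝓝 0) := by
  classical
  haveI := isFiniteMeasure μ hμ
  set T := bdryNodes F with hT
  haveI : Countable ↥T := (Set.to_countable T).to_subtype
  have hch : ∀ t : T, ∃ O : Set X, (Z ∩ cyl (t : List Bool)) ⊆ O ∧ IsOpen O ∧
      μ O ≤ (4 : ℝ≥0∞)⁻¹ ^ (t : List Bool).length * μ (cyl (t : List Bool)) := by
    rintro ⟨t, ht⟩
    have h0 : μ (Z ∩ cyl t) = 0 :=
      le_antisymm (le_trans (measure_mono Set.inter_subset_left) hZ0.le) (zero_le)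
    have hpos : (0 : ℝ≥0∞) < (4 : ℝ≥0∞)⁻¹ ^ t.length * μ (cyl t) := by
      refine ENNReal.mul_pos (pow_ne_zero _ (by norm_num)) (μcyl_ne_zero hμ t)
    obtain ⟨O, hO1, hO2, hO3⟩ := Set.exists_isOpen_lt_of_lt (μ := μ) (Z ∩ cyl t) _
      (h0 ▸ hpos)
    exact ⟨O, hO1, hO2, hO3.le⟩
  choose O hO1 hO2 hO3 using hch
  refine ⟨⋃ t : T, (O t ∩ cyl (t : List Bool)),
    isOpen_iUnion (fun t => (hO2 t).inter (isOpen_cyl _)), ?_, ?_⟩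
  · -- coverage of Z \ F
    intro β hβ
    have hex : ∃ l, cyl (seg β l) ∩ F = ∅ := by
      obtain ⟨l, hl⟩ := exists_cylseg_subset hF.isOpen_compl hβ.2
      exact ⟨l, Set.eq_empty_iff_forall_notMem.2 (fun x hx => hl hx.1 hx.2)⟩
    have hl₀pos : Nat.find hex ≠ 0 := by
      intro h
      have hspec := Nat.find_spec hex
      rw [h, seg_zero, cyl_nil, Set.univ_inter] at hspec
      exact hFne.ne_empty hspec
    obtain ⟨m, hm⟩ := Nat.exists_eq_succ_of_ne_zero hl₀pos
    have htT : seg β (m + 1) ∈ T := by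
      refine ⟨β, m, rfl, by rw [show m + 1 = Nat.find hex by omega]; exact Nat.find_spec hex, ?_⟩
      exact Nat.find_min hex (by omega)
    exact Set.mem_iUnion.2 ⟨⟨seg β (m+1), htT⟩,
      hO1 _ ⟨hβ.1, self_mem_cyl_seg β (m+1)⟩, self_mem_cyl_seg β (m+1)⟩
  · -- thinness at every point of F
    intro β hβ
    have key : ∀ l : ℕ, μ ((⋃ t : T, (O t ∩ cyl (t : List Bool))) ∩ cyl (seg β l))
        ≤ (4 : ℝ≥0∞)⁻¹ ^ (l + 1) * μ (cyl (seg β l)) := by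
      intro l
      have hsub : (⋃ t : T, (O t ∩ cyl (t : List Bool))) ∩ cyl (seg β l)
          ⊆ ⋃ t : T, (O t ∩ cyl (t : List Bool) ∩ cyl (seg β l)) := by
        intro γ hγ
        obtain ⟨A, ⟨t, rfl⟩, hA⟩ := hγ.1
        exact Set.mem_iUnion.2 ⟨t, hA, hγ.2⟩
      refine le_trans (measure_mono hsub) (le_trans (measure_iUnion_le _) ?_)
      have hterm : ∀ t : T, μ (O t ∩ cyl (t : List Bool) ∩ cyl (seg β l))
          ≤ (4 : ℝ≥0∞)⁻¹ ^ (l + 1) * μ (cyl (t : List Bool) ∩ cyl (seg β l)) := by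
        rintro ⟨t, ht⟩
        rcases Set.eq_empty_or_nonempty (cyl t ∩ cyl (seg β l)) with hemp | ⟨γ, hγ⟩
        · have h0 : μ (O ⟨t, ht⟩ ∩ cyl t ∩ cyl (seg β l)) = 0 := by
            have hsub0 : O ⟨t, ht⟩ ∩ cyl t ∩ cyl (seg β l) ⊆ cyl t ∩ cyl (seg β l) :=
              fun x hx => ⟨hx.1.2, hx.2⟩
            refine le_antisymm (le_trans (measure_mono hsub0) ?_) (zero_le)
            rw [hemp]
            simp
          rw [h0]; exact zero_le
        · -- cyl t ⊆ cyl (seg β l) and t.length ≥ l + 1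
          have htγ : t = seg γ t.length := (seg_eq_of_mem hγ.1).symm
          have hlt : l + 1 ≤ t.length := by
            by_contra hcon
            push_neg at hcon
            have hle : t.length ≤ l := by omega
            have hsub2 : cyl (seg γ l) ⊆ cyl (seg γ t.length) := cyl_seg_anti hle
            have hββ : β ∈ cyl t := by
              rw [htγ]
              apply hsub2
              rw [seg_agree hγ.2 le_rfl]
              exact self_mem_cyl_seg β l
            have := bdryNodes_spec ht
            rw [Set.eq_empty_iff_forall_notMem] at this
            exact this β ⟨hββ, hβ⟩
          have hsub3 : cyl t ⊆ cyl (seg β l) := by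
            rw [htγ]
            intro x hx
            have h5 : cyl (seg γ t.length) ⊆ cyl (seg γ l) := cyl_seg_anti (by omega)
            have := h5 hx
            rwa [seg_agree hγ.2 le_rfl] at this
          have hinter : cyl t ∩ cyl (seg β l) = cyl t := by
            rw [Set.inter_eq_left]; exact hsub3
          rw [hinter]
          calc μ (O ⟨t, ht⟩ ∩ cyl t ∩ cyl (seg β l))
              ≤ μ (O ⟨t, ht⟩) := measure_mono (fun x hx => hx.1.1)
            _ ≤ (4 : ℝ≥0∞)⁻¹ ^ t.length * μ (cyl t) := hO3 _
            _ ≤ (4 : ℝ≥0∞)⁻¹ ^ (l + 1) * μ (cyl t) := by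
                refine mul_le_mul_left ?_ _
                exact pow_le_pow_of_le_one (zero_le) (by norm_num) hlt
      refine le_trans (ENNReal.tsum_le_tsum hterm) ?_
      rw [ENNReal.tsum_mul_left]
      refine mul_le_mul_right ?_ _
      have hdisj : Pairwise (Function.onFun Disjoint fun t : T => cyl (t : List Bool) ∩ cyl (seg β l)) := by
        rintro ⟨s, hs⟩ ⟨t, ht⟩ hst
        exact ((bdryNodes_disjoint F) hs ht (fun h => hst (Subtype.ext h))).mono
          Set.inter_subset_left Set.inter_subset_left
      rw [← measure_iUnion hdisj (fun t => (measurableSet_cyl _).inter (measurableSet_cyl _))]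
      exact measure_mono (Set.iUnion_subset fun t => Set.inter_subset_right)
    -- conclude the ratio tendsto
    have hten : Tendsto (fun l : ℕ => (4 : ℝ≥0∞)⁻¹ ^ (l + 1)) atTop (𝓝 0) := by
      have h4 : (4 : ℝ≥0∞)⁻¹ < 1 := by
        rw [ENNReal.inv_lt_one]
        norm_num
      exact (ENNReal.tendsto_pow_atTop_nhds_zero_of_lt_one h4).comp
        (tendsto_add_atTop_nat 1)
    refine tendsto_of_tendsto_of_tendsto_of_le_of_le' tendsto_const_nhds hten
      (Eventually.of_forall fun l => zero_le) (Eventually.of_forall fun l => ?_)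
    rw [ENNReal.div_le_iff (μcyl_ne_zero hμ _) (μcyl_ne_top hμ _)]
    calc μ ((⋃ t : T, (O t ∩ cyl (t : List Bool))) ∩ cyl (seg β l))
        ≤ (4 : ℝ≥0∞)⁻¹ ^ (l + 1) * μ (cyl (seg β l)) := key l

end TC

section Main
variable {μ : Measure X} {C G : Set X}

/-- An adjacent pair in the chain of closed sets. -/
structure DPair (μ : Measure X) (C G F A : Set X) : Prop where
  hμ : ∀ s : List Bool, μ (cyl s) = (1/2 : ℝ≥0∞) ^ s.length
  hGm : MeasurableSet G
  hG0 : μ G = 0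
  hCne : C.Nonempty
  hFc : IsClosed F
  hAc : IsClosed A
  hCF : C ⊆ F
  hFA : F ⊆ A
  hAG : A ∩ G = ∅
  hd1 : ∀ β ∈ F, densityOne μ A β

theorem DPair.insert {F A : Set X} (h : DPair μ C G F A) :
    ∃ H, DPair μ C G F H ∧ DPair μ C G H A := by
  obtain ⟨B, hBm, hB0, hBd⟩ := density_ae h.hμ h.hAc.measurableSet
  obtain ⟨U, hUo, hUZ, hUthin⟩ := thinCover h.hμ h.hFc (h.hCne.mono h.hCF) hB0
  refine ⟨F ∪ (A ∩ Uᶜ), ?_, ?_⟩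
  · refine ⟨h.hμ, h.hGm, h.hG0, h.hCne, h.hFc,
      h.hFc.union (h.hAc.inter hUo.isClosed_compl), h.hCF,
      Set.subset_union_left, ?_, ?_⟩
    · have hsub : F ∪ (A ∩ Uᶜ) ⊆ A := Set.union_subset h.hFA Set.inter_subset_left
      rw [Set.eq_empty_iff_forall_notMem]
      intro x hx
      have := h.hAG
      rw [Set.eq_empty_iff_forall_notMem] at this
      exact this x ⟨hsub hx.1, hx.2⟩
    · intro β hβ
      refine densityOne_of_le h.hμ
        ((h.hFc.union (h.hAc.inter hUo.isClosed_compl)).measurableSet)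
        (g := fun l => μ (cyl (seg β l) \ A) / μ (cyl (seg β l))
          + μ (U ∩ cyl (seg β l)) / μ (cyl (seg β l))) ?_ ?_
      · refine Eventually.of_forall fun l => ?_
        have hsub : cyl (seg β l) \ (F ∪ (A ∩ Uᶜ)) ⊆
            (cyl (seg β l) \ A) ∪ (U ∩ cyl (seg β l)) := by
          intro γ hγ
          simp only [Set.mem_diff, Set.mem_union, Set.mem_inter_iff, Set.mem_compl_iff,
            not_or, not_and, not_not] at hγ ⊢
          rcases Classical.em (γ ∈ A) with hA | hA
          · exact Or.inr ⟨hγ.2.2 hA, hγ.1⟩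
          · exact Or.inl ⟨hγ.1, hA⟩
        calc μ (cyl (seg β l) \ (F ∪ (A ∩ Uᶜ))) / μ (cyl (seg β l))
            ≤ (μ (cyl (seg β l) \ A) + μ (U ∩ cyl (seg β l))) / μ (cyl (seg β l)) := by
              exact ENNReal.div_le_div_right
                (le_trans (measure_mono hsub) (measure_union_le _ _)) _
          _ = μ (cyl (seg β l) \ A) / μ (cyl (seg β l))
              + μ (U ∩ cyl (seg β l)) / μ (cyl (seg β l)) := ENNReal.add_div
      · have h1 := (densityOne_iff h.hμ h.hAc.measurableSet).1 (h.hd1 β hβ)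
        have h2 := hUthin β hβ
        have := Tendsto.add h1 h2
        simpa using this
  · refine ⟨h.hμ, h.hGm, h.hG0, h.hCne,
      h.hFc.union (h.hAc.inter hUo.isClosed_compl), h.hAc,
      le_trans h.hCF Set.subset_union_left,
      Set.union_subset h.hFA Set.inter_subset_left, h.hAG, ?_⟩
    intro β hβ
    rcases hβ with hβF | ⟨hβA, hβU⟩
    · exact h.hd1 β hβF
    · rcases Classical.em (β ∈ F) with hF | hF
      · exact h.hd1 β hF
      · refine hBd β hβA (fun hB => hβU (hUZ ⟨hB, hF⟩))

theorem DPair.base (hμ : ∀ s : List Bool, μ (cyl s) = (1/2 : ℝ≥0∞) ^ s.length)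
    (hC : IsClosed C) (hCne : C.Nonempty) (hGm : MeasurableSet G) (hG0 : μ G = 0)
    (hCG : C ∩ G = ∅) : ∃ A₁, DPair μ C G C A₁ := by
  obtain ⟨U, hUo, hUZ, hUthin⟩ := thinCover hμ hC hCne hG0
  refine ⟨C ∪ Uᶜ, hμ, hGm, hG0, hCne, hC, hC.union hUo.isClosed_compl,
    Set.Subset.refl C, Set.subset_union_left, ?_, ?_⟩
  · rw [Set.eq_empty_iff_forall_notMem]
    rintro x ⟨hx1, hx2⟩
    rcases hx1 with hxC | hxU
    · rw [Set.eq_empty_iff_forall_notMem] at hCG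
      exact hCG x ⟨hxC, hx2⟩
    · rcases Classical.em (x ∈ C) with hxC | hxC
      · rw [Set.eq_empty_iff_forall_notMem] at hCG
        exact hCG x ⟨hxC, hx2⟩
      · exact hxU (hUZ ⟨hx2, hxC⟩)
  · intro β hβ
    refine densityOne_of_le hμ (hC.union hUo.isClosed_compl).measurableSet
      (Eventually.of_forall fun l => ?_) (hUthin β hβ)
    refine ENNReal.div_le_div_right (measure_mono ?_) _
    intro γ hγ
    simp only [Set.mem_diff, Set.mem_union, Set.mem_compl_iff, not_or, not_not] at hγ
    exact ⟨hγ.2.2, hγ.1⟩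

open scoped Classical in
/-- interpolation choice function -/
noncomputable def dins (μ : Measure X) (C G F A : Set X) : Set X :=
  if h : DPair μ C G F A then h.insert.choose else A

lemma dins_spec {F A : Set X} (h : DPair μ C G F A) :
    DPair μ C G F (dins μ C G F A) ∧ DPair μ C G (dins μ C G F A) A := by
  rw [dins, dif_pos h]
  exact h.insert.choose_spec

/-- the dyadic chain: `chain n k` is the closed set for the dyadic rational `k / 2^n`. -/
noncomputable def chain (μ : Measure X) (C G A₁ : Set X) : ℕ → ℕ → Set X :=
  fun n => Nat.rec (motive := fun _ => ℕ → Set X)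
    (fun k => if k = 0 then C else A₁)
    (fun _ f k => if k % 2 = 0 then f (k / 2)
      else dins μ C G (f (k / 2)) (f (k / 2 + 1))) n

variable {A₁ : Set X}

lemma chain_succ (n k : ℕ) : chain μ C G A₁ (n+1) k =
    if k % 2 = 0 then chain μ C G A₁ n (k / 2)
      else dins μ C G (chain μ C G A₁ n (k / 2)) (chain μ C G A₁ n (k / 2 + 1)) := rfl

lemma chain_succ_even (n k : ℕ) : chain μ C G A₁ (n+1) (2*k) = chain μ C G A₁ n k := by
  rw [chain_succ, if_pos (by omega : (2*k) % 2 = 0), show (2*k)/2 = k by omega]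

lemma chain_succ_odd (n k : ℕ) : chain μ C G A₁ (n+1) (2*k+1) =
    dins μ C G (chain μ C G A₁ n k) (chain μ C G A₁ n (k+1)) := by
  rw [chain_succ, if_neg (by omega : ¬ (2*k+1) % 2 = 0), show (2*k+1)/2 = k by omega]

lemma chain_zero_zero : chain μ C G A₁ 0 0 = C := rfl

lemma chain_zero_one : chain μ C G A₁ 0 1 = A₁ := rfl

variable (hbase : DPair μ C G C A₁)
include hbase

lemma chain_good : ∀ n, ∀ k < 2^n, DPair μ C G (chain μ C G A₁ n k) (chain μ C G A₁ n (k+1)) := by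
  intro n
  induction n with
  | zero =>
    intro k hk
    interval_cases k
    exact hbase
  | succ n ih =>
    intro k hk
    have h2 : (2:ℕ)^(n+1) = 2 * 2^n := by ring
    rcases Nat.even_or_odd k with ⟨j, hj⟩ | ⟨j, hj⟩
    · subst hj
      have hjlt : j < 2^n := by omega
      have he : j + j = 2 * j := by ring
      rw [he, chain_succ_even, show 2*j+1 = 2*j+1 from rfl, chain_succ_odd]
      exact (dins_spec (ih j hjlt)).1
    · subst hj
      have hjlt : j < 2^n := by omega
      rw [chain_succ_odd, show 2*j+1+1 = 2*(j+1) by ring, chain_succ_even]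
      exact (dins_spec (ih j hjlt)).2

lemma chain_bot : ∀ n, chain μ C G A₁ n 0 = C := by
  intro n
  induction n with
  | zero => rfl
  | succ n ih =>
    have : (0:ℕ) = 2 * 0 := by norm_num
    rw [this, chain_succ_even]
    exact ih

lemma chain_subset : ∀ n k k', k ≤ k' → k' ≤ 2^n →
    chain μ C G A₁ n k ⊆ chain μ C G A₁ n k' := by
  intro n k k' hk hk'
  obtain ⟨d, rfl⟩ := Nat.exists_eq_add_of_le hk
  clear hk
  induction d with
  | zero => exact Set.Subset.refl _
  | succ d ih =>
    have h1 : k + d < 2^n := by omega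
    refine le_trans (ih (by omega)) ?_
    have := (chain_good hbase n (k+d) h1).hFA
    rw [show k + (d+1) = (k+d)+1 by ring]
    exact this

lemma chain_closed : ∀ n k, k ≤ 2^n → IsClosed (chain μ C G A₁ n k) := by
  intro n k hk
  rcases Nat.eq_zero_or_pos k with rfl | hpos
  · rw [chain_bot hbase]
    exact hbase.hFc
  · obtain ⟨j, rfl⟩ := Nat.exists_eq_succ_of_ne_zero hpos.ne'
    exact (chain_good hbase n j (by omega)).hAc

lemma chain_inter_G : ∀ n k, 1 ≤ k → k ≤ 2^n → chain μ C G A₁ n k ∩ G = ∅ := by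
  intro n k h1 h2
  obtain ⟨j, rfl⟩ := Nat.exists_eq_succ_of_ne_zero (by omega : k ≠ 0)
  exact (chain_good hbase n j (by omega)).hAG

lemma chain_C_subset : ∀ n k, k ≤ 2^n → C ⊆ chain μ C G A₁ n k := by
  intro n k hk
  have := chain_subset hbase n 0 k (by omega) hk
  rwa [chain_bot hbase] at this

lemma chain_lift : ∀ m n k, chain μ C G A₁ (n+m) (k * 2^m) = chain μ C G A₁ n k := by
  intro m
  induction m with
  | zero => intro n k; simp
  | succ m ih =>
    intro n k
    have h1 : k * 2^(m+1) = 2 * (k * 2^m) := by ring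
    have h2 : n + (m+1) = (n + m) + 1 := by ring
    rw [h1, h2, chain_succ_even, ih]

lemma chain_mono {n k n' k' : ℕ} (hk : k ≤ 2^n) (hk' : k' ≤ 2^n')
    (hle : k * 2^n' ≤ k' * 2^n) : chain μ C G A₁ n k ⊆ chain μ C G A₁ n' k' := by
  have e1 : chain μ C G A₁ n k = chain μ C G A₁ (n + n') (k * 2^n') := (chain_lift hbase n' n k).symm
  have e2 : chain μ C G A₁ n' k' = chain μ C G A₁ (n + n') (k' * 2^n) := by
    rw [show n + n' = n' + n by ring]
    exact (chain_lift hbase n n' k').symm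
  rw [e1, e2]
  refine chain_subset hbase (n+n') _ _ hle ?_
  calc k' * 2^n ≤ 2^n' * 2^n := Nat.mul_le_mul_right _ hk'
    _ = 2^(n+n') := by rw [← pow_add]; ring_nf


end Main

section S
variable {μ : Measure X} {C G A₁ : Set X}

/-- the value set for the infimum defining the separating function -/
def vset (μ : Measure X) (C G A₁ : Set X) (β : X) : Set ℝ :=
  {1} ∪ {x : ℝ | ∃ n k : ℕ, 1 ≤ k ∧ k ≤ 2^n ∧ x = (k:ℝ)/2^n ∧ β ∈ chain μ C G A₁ n k}

noncomputable def hfun (μ : Measure X) (C G A₁ : Set X) (β : X) : ℝ :=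
  sInf (vset μ C G A₁ β)

lemma vset_nonempty (β : X) : (vset μ C G A₁ β).Nonempty := ⟨1, Or.inl rfl⟩

lemma vset_nonneg {β : X} {x : ℝ} (hx : x ∈ vset μ C G A₁ β) : 0 ≤ x := by
  rcases hx with h | ⟨n, k, h1, h2, rfl, h4⟩
  · rw [Set.mem_singleton_iff] at h
    rw [h]; norm_num
  · positivity

lemma vset_bddBelow (β : X) : BddBelow (vset μ C G A₁ β) :=
  ⟨0, fun x hx => vset_nonneg hx⟩

lemma hfun_nonneg (β : X) : 0 ≤ hfun μ C G A₁ β :=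
  le_csInf (vset_nonempty β) (fun x hx => vset_nonneg hx)

lemma hfun_le_one (β : X) : hfun μ C G A₁ β ≤ 1 :=
  csInf_le (vset_bddBelow β) (Or.inl rfl)

lemma hfun_le {β : X} {n k : ℕ} (h : β ∈ chain μ C G A₁ n k) (h1 : 1 ≤ k) (h2 : k ≤ 2^n) :
    hfun μ C G A₁ β ≤ (k:ℝ)/2^n :=
  csInf_le (vset_bddBelow β) (Or.inr ⟨n, k, h1, h2, rfl, h⟩)

lemma dyadic_le_one {n k : ℕ} (h2 : k ≤ 2^n) : (k:ℝ)/2^n ≤ 1 := by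
  rw [div_le_one (by positivity)]
  exact_mod_cast h2

lemma pick_lt (x : ℝ) (n : ℕ) :
    x < ((⌊x * 2^n⌋₊ + 1 : ℕ) : ℝ)/2^n := by
  have hpow : (0:ℝ) < 2^n := by positivity
  rw [lt_div_iff₀ hpow]
  push_cast
  exact Nat.lt_floor_add_one _

lemma pick_le (x : ℝ) (hx : 0 ≤ x) (n : ℕ) :
    ((⌊x * 2^n⌋₊ + 1 : ℕ) : ℝ)/2^n ≤ x + 1/2^n := by
  have hpow : (0:ℝ) < 2^n := by positivity
  rw [div_le_iff₀ hpow]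
  push_cast
  have h := Nat.floor_le (a := x * 2^n) (by positivity)
  rw [add_mul]
  refine add_le_add (by linarith) ?_
  rw [one_div, inv_mul_cancel₀ (ne_of_gt hpow)]

lemma nat_le_pow_of_div_lt_one {k n : ℕ} (h : (k:ℝ)/2^n < 1) : k ≤ 2^n := by
  have hpow : (0:ℝ) < 2^n := by positivity
  rw [div_lt_one hpow] at h
  have h2 : (k:ℝ) < ((2^n : ℕ) : ℝ) := by push_cast; linarith
  exact_mod_cast h2.le

variable (hbase : DPair μ C G C A₁)
include hbase

lemma mem_of_lt {β : X} {n k : ℕ} (hlt : hfun μ C G A₁ β < (k:ℝ)/2^n) (h2 : k ≤ 2^n) :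
    β ∈ chain μ C G A₁ n k := by
  obtain ⟨x, hx, hxlt⟩ := exists_lt_of_csInf_lt (vset_nonempty β) hlt
  rcases hx with h | ⟨n', k', h1', h2', rfl, h4'⟩
  · rw [Set.mem_singleton_iff] at h
    rw [h] at hxlt
    exact absurd (dyadic_le_one h2) (not_le.2 hxlt)
  · refine chain_mono hbase h2' h2 ?_ h4'
    have hpos : (0:ℝ) < 2^n := by positivity
    have hpos' : (0:ℝ) < 2^n' := by positivity
    rw [div_lt_div_iff₀ hpos' hpos] at hxlt
    have : (k' : ℝ) * 2^n ≤ (k : ℝ) * 2^n' := le_of_lt hxlt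
    exact_mod_cast this

lemma not_mem_of_gt {β : X} {n k : ℕ} (hgt : (k:ℝ)/2^n < hfun μ C G A₁ β) (h1 : 1 ≤ k)
    (h2 : k ≤ 2^n) : β ∉ chain μ C G A₁ n k := by
  intro hmem
  exact absurd (hfun_le hmem h1 h2) (not_le.2 hgt)

lemma hfun_eq_zero_on_C {β : X} (hβ : β ∈ C) : hfun μ C G A₁ β = 0 := by
  refine le_antisymm ?_ (hfun_nonneg β)
  have hle : ∀ n : ℕ, hfun μ C G A₁ β ≤ (1:ℝ)/2^n := by
    intro n
    have hmem : β ∈ chain μ C G A₁ n 1 :=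
      chain_C_subset hbase n 1 Nat.one_le_two_pow hβ
    simpa using hfun_le (μ := μ) hmem le_rfl Nat.one_le_two_pow
  have htend : Tendsto (fun n : ℕ => (1:ℝ)/2^n) atTop (𝓝 0) := by
    have h0 : Tendsto (fun n : ℕ => ((1:ℝ)/2)^n) atTop (𝓝 0) :=
      tendsto_pow_atTop_nhds_zero_of_lt_one (by norm_num) (by norm_num)
    refine h0.congr (fun n => ?_)
    rw [div_pow, one_pow]
  exact ge_of_tendsto' htend hle

lemma hfun_eq_one_on_G {β : X} (hβ : β ∈ G) : hfun μ C G A₁ β = 1 := by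
  have hset : vset μ C G A₁ β = {1} := by
    rw [vset]
    rw [Set.union_eq_self_of_subset_right]
    rintro x ⟨n, k, h1, h2, rfl, h4⟩
    exfalso
    have := chain_inter_G hbase n k h1 h2
    rw [Set.eq_empty_iff_forall_notMem] at this
    exact this β ⟨h4, hβ⟩
  rw [hfun, hset, csInf_singleton]

lemma level_set_eq {y : ℝ} (hy0 : 0 ≤ y) (hy1 : y < 1) :
    {β : X | hfun μ C G A₁ β ≤ y} =
      ⋂ n : ℕ, ⋂ k : ℕ, ⋂ (_ : 1 ≤ k ∧ k ≤ 2^n ∧ y < (k:ℝ)/2^n), chain μ C G A₁ n k := by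
  ext β
  simp only [Set.mem_setOf_eq, Set.mem_iInter]
  constructor
  · rintro h n k ⟨h1, h2, h3⟩
    exact mem_of_lt hbase (lt_of_le_of_lt h h3) h2
  · intro h
    refine le_of_forall_pos_le_add (fun ε hε => ?_)
    obtain ⟨n, hn⟩ := exists_pow_lt_of_lt_one (lt_min hε (by linarith) : (0:ℝ) < min ε (1 - y))
      (by norm_num : (1:ℝ)/2 < 1)
    have hn' : (1:ℝ)/2^n < min ε (1-y) := by
      rw [← one_div_pow]; exact hn
    have hky : y < ((⌊y * 2^n⌋₊ + 1 : ℕ):ℝ)/2^n := pick_lt y n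
    have hkle : ((⌊y * 2^n⌋₊ + 1 : ℕ):ℝ)/2^n ≤ y + 1/2^n := pick_le y hy0 n
    have hn2 : ⌊y * 2^n⌋₊ + 1 ≤ 2^n := by
      refine nat_le_pow_of_div_lt_one (lt_of_le_of_lt hkle ?_)
      have h2 : (1:ℝ)/2^n < 1 - y := lt_of_lt_of_le hn' (min_le_right _ _)
      linarith
    have hmem := h n (⌊y * 2^n⌋₊ + 1) ⟨Nat.le_add_left 1 _, hn2, hky⟩
    calc hfun μ C G A₁ β ≤ ((⌊y * 2^n⌋₊ + 1 : ℕ):ℝ)/2^n := hfun_le hmem (Nat.le_add_left 1 _) hn2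
      _ ≤ y + 1/2^n := hkle
      _ ≤ y + ε := by
        have := lt_of_lt_of_le hn' (min_le_left _ _)
        linarith

lemma hfun_lsc : LowerSemicontinuous (hfun μ C G A₁) := by
  rw [lowerSemicontinuous_iff_isOpen_preimage]
  intro y
  rcases lt_or_ge y 0 with hy | hy0
  · have : hfun μ C G A₁ ⁻¹' Set.Ioi y = Set.univ := by
      ext β
      simp only [Set.mem_preimage, Set.mem_Ioi, Set.mem_univ, iff_true]
      exact lt_of_lt_of_le hy (hfun_nonneg β)
    rw [this]; exact isOpen_univ
  rcases le_or_gt 1 y with hy1 | hy1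
  · have : hfun μ C G A₁ ⁻¹' Set.Ioi y = ∅ := by
      ext β
      simp only [Set.mem_preimage, Set.mem_Ioi, Set.mem_empty_iff_false, iff_false, not_lt]
      exact le_trans (hfun_le_one β) hy1
    rw [this]; exact isOpen_empty
  · have heq : hfun μ C G A₁ ⁻¹' Set.Ioi y = {β : X | hfun μ C G A₁ β ≤ y}ᶜ := by
      ext β
      simp [not_le]
    rw [heq, level_set_eq hbase hy0 hy1]
    have hcl : IsClosed (⋂ n : ℕ, ⋂ k : ℕ, ⋂ (_ : 1 ≤ k ∧ k ≤ 2^n ∧ y < (k:ℝ)/2^n),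
        chain μ C G A₁ n k) :=
      isClosed_iInter fun n => isClosed_iInter fun k =>
        isClosed_iInter fun hcond => chain_closed hbase n k hcond.2.1
    exact hcl.isOpen_compl

/-- the main approximate-continuity statement -/
lemma hfun_approx (β : X) (ε : ℝ) (hε : 0 < ε) :
    densityOne μ {γ : X | |hfun μ C G A₁ γ - hfun μ C G A₁ β| < ε} β := by
  set a := hfun μ C G A₁ β with ha
  -- upper part
  have hupper : ∃ D : Set X, densityOne μ D β ∧ ∀ γ ∈ D, hfun μ C G A₁ γ < a + ε := by
    by_cases hcase : a + ε ≤ 1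
    · obtain ⟨n, hn⟩ := exists_pow_lt_of_lt_one (by linarith : (0:ℝ) < ε/2)
        (by norm_num : (1:ℝ)/2 < 1)
      have hn' : (1:ℝ)/2^n < ε/2 := by rw [← one_div_pow]; exact hn
      have hpow : (0:ℝ) < 2^n := by positivity
      have ha0 : 0 ≤ a := hfun_nonneg β
      have hak : a < ((⌊a * 2^n⌋₊ + 1 : ℕ):ℝ)/2^n := pick_lt a n
      have hkle : ((⌊a * 2^n⌋₊ + 1 : ℕ):ℝ)/2^n ≤ a + 1/2^n := pick_le a ha0 n
      have hq1 : ((⌊a * 2^n⌋₊ + 1 + 1 : ℕ):ℝ)/2^n < a + ε := by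
        have he : ((⌊a * 2^n⌋₊ + 1 + 1 : ℕ):ℝ) = ((⌊a * 2^n⌋₊ + 1 : ℕ):ℝ) + 1 := by push_cast; ring
        rw [he, add_div]
        have h1 : (1:ℝ)/2^n < ε/2 := hn'
        calc ((⌊a * 2^n⌋₊ + 1 : ℕ):ℝ)/2^n + 1/2^n ≤ (a + 1/2^n) + 1/2^n := by linarith
          _ < a + ε := by linarith
      have hk₁le : ⌊a * 2^n⌋₊ + 1 + 1 ≤ 2^n :=
        nat_le_pow_of_div_lt_one (lt_of_lt_of_le hq1 hcase)
      have hβmem : β ∈ chain μ C G A₁ n (⌊a * 2^n⌋₊ + 1) := mem_of_lt hbase hak (by omega)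
      refine ⟨chain μ C G A₁ n (⌊a * 2^n⌋₊ + 1 + 1),
        (chain_good hbase n (⌊a * 2^n⌋₊ + 1) (by omega)).hd1 β hβmem, ?_⟩
      intro γ hγ
      have hle2 := hfun_le (μ := μ) hγ (by omega) hk₁le
      exact lt_of_le_of_lt hle2 hq1
    · refine ⟨Set.univ, densityOne_univ hbase.hμ β, fun γ _ => ?_⟩
      push_neg at hcase
      exact lt_of_le_of_lt (hfun_le_one γ) hcase
  -- lower part
  have hlower : ∃ l₀ : ℕ, ∀ l, l₀ ≤ l → ∀ γ ∈ cyl (seg β l), a - ε < hfun μ C G A₁ γ := by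
    by_cases hcase : 0 ≤ a - ε
    · set c := a - ε with hc
      have hca : c < a := by simp [hc]; linarith
      obtain ⟨m, hm⟩ := exists_pow_lt_of_lt_one (by linarith : (0:ℝ) < a - c)
        (by norm_num : (1:ℝ)/2 < 1)
      have hm' : (1:ℝ)/2^m < a - c := by rw [← one_div_pow]; exact hm
      have hck : c < ((⌊c * 2^m⌋₊ + 1 : ℕ):ℝ)/2^m := pick_lt c m
      have hkle : ((⌊c * 2^m⌋₊ + 1 : ℕ):ℝ)/2^m ≤ c + 1/2^m := pick_le c hcase m
      have hka : ((⌊c * 2^m⌋₊ + 1 : ℕ):ℝ)/2^m < a := by linarith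
      have hk₂le : ⌊c * 2^m⌋₊ + 1 ≤ 2^m :=
        nat_le_pow_of_div_lt_one (lt_of_lt_of_le hka (hfun_le_one β))
      have hnm : β ∉ chain μ C G A₁ m (⌊c * 2^m⌋₊ + 1) :=
        not_mem_of_gt hbase hka (by omega) hk₂le
      have hop : IsOpen (chain μ C G A₁ m (⌊c * 2^m⌋₊ + 1))ᶜ :=
        (chain_closed hbase m (⌊c * 2^m⌋₊ + 1) hk₂le).isOpen_compl
      obtain ⟨l₀, hl₀⟩ := exists_cylseg_subset hop hnm
      refine ⟨l₀, fun l hl γ hγ => ?_⟩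
      have hγn : γ ∉ chain μ C G A₁ m (⌊c * 2^m⌋₊ + 1) := hl₀ (cyl_seg_anti hl hγ)
      have hgecalc : ((⌊c * 2^m⌋₊ + 1 : ℕ):ℝ)/2^m ≤ hfun μ C G A₁ γ := by
        by_contra hcon
        push_neg at hcon
        exact hγn (mem_of_lt hbase hcon hk₂le)
      linarith
    · exact ⟨0, fun l _ γ _ => lt_of_lt_of_le (by linarith) (hfun_nonneg γ)⟩
  obtain ⟨D, hD1, hD2⟩ := hupper
  obtain ⟨l₀, hl₀⟩ := hlower
  refine densityOne_squeeze hbase.hμ hD1 l₀ (fun l hl => ?_)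
  rintro γ ⟨hγD, hγc⟩
  refine ⟨?_, hγc⟩
  simp only [Set.mem_setOf_eq]
  rw [abs_lt]
  constructor
  · have := hl₀ l hl γ hγc
    linarith
  · have := hD2 γ hγD
    linarith


end S

end ZahorskiAux

/-- Urysohn-type lemma for the density topology: for `C` closed
and `G` a Gδ set disjoint from `C` with `λ(G) = 0`, there is a λ-measurable
lower semicontinuous `h : 2^ω → [0,1]` with `h ≡ 0` on `C`, `h ≡ 1` on `G`,
which is approximately continuous at every point. -/
theorem urysohn_density_topology
    (μ : Measure (ℕ → Bool))
    (hμ : ∀ s : List Bool, μ (cyl s) = (1/2 : ℝ≥0∞) ^ s.length)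
    (C G : Set (ℕ → Bool)) (hC : IsClosed C) (hG : IsGδ G)
    (hdisj : Disjoint C G) (hG0 : μ G = 0) :
    ∃ h : (ℕ → Bool) → ℝ,
      (∀ β, h β ∈ Set.Icc (0:ℝ) 1) ∧ Measurable h ∧ LowerSemicontinuous h ∧
      (∀ β ∈ C, h β = 0) ∧ (∀ β ∈ G, h β = 1) ∧
      ∀ β : ℕ → Bool, ∀ ε > (0:ℝ), densityOne μ {γ | |h γ - h β| < ε} β := by
  classical
  open ZahorskiAux in
  rcases Set.eq_empty_or_nonempty C with rfl | hCne
  · refine ⟨fun _ => 1, fun β => ⟨zero_le_one, le_refl 1⟩, measurable_const,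
      lowerSemicontinuous_const, fun β hβ => absurd hβ (Set.notMem_empty β),
      fun β _ => rfl, ?_⟩
    intro β ε hε
    have huniv : {γ : ℕ → Bool | |(1:ℝ) - 1| < ε} = Set.univ := by
      ext γ
      simp only [sub_self, abs_zero, Set.mem_setOf_eq, Set.mem_univ, iff_true]
      exact hε
    rw [huniv]
    exact densityOne_univ hμ β
  · have hCG : C ∩ G = ∅ := Set.disjoint_iff_inter_eq_empty.1 hdisj
    obtain ⟨A₁, hbase⟩ := DPair.base hμ hC hCne hG.measurableSet hG0 hCG
    exact ⟨hfun μ C G A₁, fun β => ⟨hfun_nonneg β, hfun_le_one β⟩,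
      (hfun_lsc hbase).measurable, hfun_lsc hbase,
      fun β hβ => hfun_eq_zero_on_C hbase hβ,
      fun β hβ => hfun_eq_one_on_G hbase hβ,
      fun β ε hε => hfun_approx hbase β ε hε⟩
end

section
/- Let (f_n)_{n∈ℕ} be a sequence of martingales such that osc(f_n,β) ∈ {0} ∪ [1/2, 1] for every n ∈ ℕ and every β ∈ 2^ω. Then there exists a martingale f with D(f) = ⋃_{n∈ℕ} D(f_n). -/
open MeasureTheory Filter Topology
open scoped ENNReal

noncomputable def oscS (u : ℕ → ℝ) (N : ℕ) : ℝ :=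
  ⨆ p : {n : ℕ // N ≤ n}, ⨆ q : {n : ℕ // N ≤ n}, |u p.1 - u q.1|

noncomputable def oscSeq (u : ℕ → ℝ) : ℝ := ⨅ N, oscS u N

instance (N : ℕ) : Nonempty {n : ℕ // N ≤ n} := ⟨⟨N, le_rfl⟩⟩

lemma oscS_le {u : ℕ → ℝ} {N : ℕ} {c : ℝ}
    (hc : ∀ p q, N ≤ p → N ≤ q → |u p - u q| ≤ c) : oscS u N ≤ c :=
  ciSup_le fun p => ciSup_le fun q => hc p q p.2 q.2

lemma le_oscS {u : ℕ → ℝ} {C : ℝ} (hC : ∀ p q, |u p - u q| ≤ C)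
    {N p q : ℕ} (hp : N ≤ p) (hq : N ≤ q) : |u p - u q| ≤ oscS u N := by
  have hinner : ∀ p' : {n : ℕ // N ≤ n},
      BddAbove (Set.range fun q' : {n : ℕ // N ≤ n} => |u p'.1 - u q'.1|) := by
    intro p'; exact ⟨C, by rintro x ⟨q', rfl⟩; exact hC _ _⟩
  have houter : BddAbove (Set.range fun p' : {n : ℕ // N ≤ n} =>
      ⨆ q' : {n : ℕ // N ≤ n}, |u p'.1 - u q'.1|) :=
    ⟨C, by rintro x ⟨p', rfl⟩; exact ciSup_le fun q' => hC _ _⟩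
  refine le_ciSup_of_le houter ⟨p, hp⟩ ?_
  exact le_ciSup (hinner ⟨p, hp⟩) ⟨q, hq⟩

lemma oscS_nonneg {u : ℕ → ℝ} {C : ℝ} (hC : ∀ p q, |u p - u q| ≤ C) (N : ℕ) :
    0 ≤ oscS u N := by simpa using le_oscS hC (le_refl N) (le_refl N)

lemma oscS_antitone {u : ℕ → ℝ} {C : ℝ} (hC : ∀ p q, |u p - u q| ≤ C) :
    Antitone (oscS u) := fun N M h =>
  oscS_le fun p q hp hq => le_oscS hC (h.trans hp) (h.trans hq)

lemma oscSeq_nonneg {u : ℕ → ℝ} {C : ℝ} (hC : ∀ p q, |u p - u q| ≤ C) :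
    0 ≤ oscSeq u := le_ciInf fun N => oscS_nonneg hC N

lemma oscSeq_le_oscS {u : ℕ → ℝ} {C : ℝ} (hC : ∀ p q, |u p - u q| ≤ C) (N : ℕ) :
    oscSeq u ≤ oscS u N :=
  ciInf_le ⟨0, by rintro x ⟨N', rfl⟩; exact oscS_nonneg hC N'⟩ N

lemma oscSeq_le_of_diff {u : ℕ → ℝ} {c : ℝ} (hc : ∀ p q, |u p - u q| ≤ c) :
    oscSeq u ≤ c :=
  (oscSeq_le_oscS hc 0).trans (oscS_le fun p q _ _ => hc p q)

lemma oscSeq_add {u v : ℕ → ℝ} {Cu Cv : ℝ}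
    (hu : ∀ p q, |u p - u q| ≤ Cu) (hv : ∀ p q, |v p - v q| ≤ Cv) :
    oscSeq (fun l => u l + v l) ≤ oscSeq u + oscSeq v := by
  have huv : ∀ p q, |(u p + v p) - (u q + v q)| ≤ Cu + Cv := by
    intro p q
    rw [add_sub_add_comm]
    exact (abs_add_le _ _).trans (add_le_add (hu p q) (hv p q))
  have h1 : ∀ N, oscS (fun l => u l + v l) N ≤ oscS u N + oscS v N := by
    intro N
    refine oscS_le fun p q hp hq => ?_
    calc |(u p + v p) - (u q + v q)| = |(u p - u q) + (v p - v q)| := by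
            rw [add_sub_add_comm]
      _ ≤ |u p - u q| + |v p - v q| := abs_add_le _ _
      _ ≤ _ := add_le_add (le_oscS hu hp hq) (le_oscS hv hp hq)
  have hbu : BddBelow (Set.range (oscS u)) :=
    ⟨0, by rintro x ⟨N, rfl⟩; exact oscS_nonneg hu N⟩
  have hbv : BddBelow (Set.range (oscS v)) :=
    ⟨0, by rintro x ⟨N, rfl⟩; exact oscS_nonneg hv N⟩
  have h2 : Tendsto (fun N => oscS u N + oscS v N) atTop
      (𝓝 (⨅ N, (oscS u N + oscS v N))) :=
    tendsto_atTop_ciInf ((oscS_antitone hu).add (oscS_antitone hv))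
      ⟨0, by
        rintro x ⟨N, rfl⟩
        exact add_nonneg (oscS_nonneg hu N) (oscS_nonneg hv N)⟩
  have h3 : Tendsto (fun N => oscS u N + oscS v N) atTop
      (𝓝 (oscSeq u + oscSeq v)) :=
    (tendsto_atTop_ciInf (oscS_antitone hu) hbu).add
      (tendsto_atTop_ciInf (oscS_antitone hv) hbv)
  have h4 : (⨅ N, (oscS u N + oscS v N)) = oscSeq u + oscSeq v :=
    tendsto_nhds_unique h2 h3
  calc oscSeq (fun l => u l + v l) ≤ ⨅ N, (oscS u N + oscS v N) :=
        le_ciInf fun N => (oscSeq_le_oscS huv N).trans (h1 N)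
    _ = _ := h4

lemma oscSeq_neg {u : ℕ → ℝ} : oscSeq (fun l => -u l) = oscSeq u := by
  unfold oscSeq oscS
  congr 1; funext N; congr 1; funext p; congr 1; funext q
  rw [neg_sub_neg, abs_sub_comm]

lemma oscSeq_const_mul {u : ℕ → ℝ} {c : ℝ} (hc : 0 ≤ c) :
    oscSeq (fun l => c * u l) = c * oscSeq u := by
  unfold oscSeq oscS
  rw [Real.mul_iInf_of_nonneg hc]; congr 1; funext N
  rw [Real.mul_iSup_of_nonneg hc]; congr 1; funext p
  rw [Real.mul_iSup_of_nonneg hc]; congr 1; funext q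
  rw [← mul_sub, abs_mul, abs_of_nonneg hc]

lemma oscSeq_sum {v : ℕ → ℕ → ℝ} {C : ℕ → ℝ}
    (hv : ∀ m p q, |v m p - v m q| ≤ C m) (k : ℕ) :
    oscSeq (fun l => ∑ m ∈ Finset.range k, v m l) ≤
      ∑ m ∈ Finset.range k, oscSeq (v m) := by
  induction k with
  | zero =>
      simp only [Finset.range_zero, Finset.sum_empty]
      exact oscSeq_le_of_diff (c := 0) (by simp)
  | succ k ih =>
      have he : (fun l => ∑ m ∈ Finset.range (k+1), v m l) =
          fun l => (∑ m ∈ Finset.range k, v m l) + v k l := by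
        funext l; exact Finset.sum_range_succ _ _
      have hb : ∀ p q, |(∑ m ∈ Finset.range k, v m p) -
          (∑ m ∈ Finset.range k, v m q)| ≤ ∑ m ∈ Finset.range k, C m := by
        intro p q
        rw [← Finset.sum_sub_distrib]
        exact (Finset.abs_sum_le_sum_abs _ _).trans
          (Finset.sum_le_sum fun m _ => hv m p q)
      rw [he, Finset.sum_range_succ]
      exact (oscSeq_add hb (hv k)).trans (add_le_add ih le_rfl)

lemma abs_diff_le_of_mem {u : ℕ → ℝ} {a b : ℝ} (h : ∀ l, u l ∈ Set.Icc a b) (p q : ℕ) :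
    |u p - u q| ≤ b - a := by
  rcases h p with ⟨h1, h2⟩; rcases h q with ⟨h3, h4⟩
  rw [abs_sub_le_iff]; constructor <;> linarith


set_option maxHeartbeats 1000000 in
/-- if `(f_n)` is a sequence of martingales with
`osc(f_n,β) ∈ {0} ∪ [1/2,1]` for all `n` and `β`, then some martingale `f`
satisfies `D(f) = ⋃_n D(f_n)`. -/
theorem union_of_divergence_sets
    (f : ℕ → List Bool → ℝ) (hf : ∀ n, IsMartingale (f n))
    (hosc : ∀ n : ℕ, ∀ β : ℕ → Bool,
      osc (f n) β ∈ ({0} : Set ℝ) ∪ Set.Icc (1/2 : ℝ) 1) :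
    ∃ g : List Bool → ℝ, IsMartingale g ∧ divSet g = ⋃ n, divSet (f n) := by
  classical
  set w : ℕ → ℝ := fun n => (1/5 : ℝ)^(n+1) with hw_def
  have hw_pos : ∀ n, 0 < w n := fun n => pow_pos (by norm_num) _
  have hw_sum : Summable w := by
    have h : Summable (fun n : ℕ => (1/5:ℝ)^n) :=
      summable_geometric_of_lt_one (by norm_num) (by norm_num)
    exact (h.mul_right (1/5)).congr fun n => (pow_succ (1/5:ℝ) n).symm
  have hfb : ∀ n s, f n s ∈ Set.Icc (0:ℝ) 1 := fun n => (hf n).1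
  have hterm_nonneg : ∀ s n, 0 ≤ w n * f n s :=
    fun s n => mul_nonneg (hw_pos n).le (hfb n s).1
  have hterm_le : ∀ s n, w n * f n s ≤ w n :=
    fun s n => mul_le_of_le_one_right (hw_pos n).le (hfb n s).2
  have hsum : ∀ s, Summable (fun n => w n * f n s) :=
    fun s => Summable.of_nonneg_of_le (hterm_nonneg s) (hterm_le s) hw_sum
  set g : List Bool → ℝ := fun s => ∑' n, w n * f n s with hg_def
  have hw_tsum : ∑' n, w n = 1/4 := by
    have h : ∑' n : ℕ, (1/5:ℝ)^n = (1 - 1/5)⁻¹ :=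
      tsum_geometric_of_lt_one (by norm_num) (by norm_num)
    calc ∑' n, w n = ∑' n, (1/5:ℝ)^n * (1/5) := by
          apply tsum_congr; intro n
          show (1/5:ℝ)^(n+1) = _
          rw [pow_succ]
      _ = (1 - 1/5:ℝ)⁻¹ * (1/5) := by rw [tsum_mul_right, h]
      _ = 1/4 := by norm_num
  have hg_mem : ∀ s, g s ∈ Set.Icc (0:ℝ) 1 := by
    intro s
    constructor
    · exact tsum_nonneg (hterm_nonneg s)
    · calc g s ≤ ∑' n, w n := Summable.tsum_le_tsum (hterm_le s) (hsum s) hw_sum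
        _ = 1/4 := hw_tsum
        _ ≤ 1 := by norm_num
  have hg_mart : IsMartingale g := by
    refine ⟨hg_mem, fun s => ?_⟩
    have hsplit : ∀ n, w n * f n s =
        w n * f n (s ++ [false]) / 2 + w n * f n (s ++ [true]) / 2 := by
      intro n; rw [(hf n).2 s]; ring
    calc g s = ∑' n, (w n * f n (s ++ [false]) / 2 + w n * f n (s ++ [true]) / 2) := by
          rw [hg_def]; exact tsum_congr hsplit
      _ = (∑' n, w n * f n (s ++ [false]) / 2) + ∑' n, w n * f n (s ++ [true]) / 2 :=
          Summable.tsum_add ((hsum _).div_const 2) ((hsum _).div_const 2)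
      _ = (g (s ++ [false]) + g (s ++ [true])) / 2 := by
          rw [tsum_div_const, tsum_div_const]; ring
  refine ⟨g, hg_mart, ?_⟩
  ext β
  simp only [Set.mem_iUnion, divSet, Set.mem_setOf_eq]
  set u : ℕ → ℕ → ℝ := fun n l => w n * f n (seg β l) with hu_def
  have hub : ∀ n p q, |u n p - u n q| ≤ w n := by
    intro n p q
    simpa using abs_diff_le_of_mem (a := 0) (b := w n)
      (fun l => ⟨hterm_nonneg _ n, hterm_le _ n⟩) p q
  have hgb : ∀ p q, |g (seg β p) - g (seg β q)| ≤ 1 := by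
    intro p q
    simpa using abs_diff_le_of_mem (fun l => hg_mem (seg β l)) p q
  have hfnb : ∀ n p q, |f n (seg β p) - f n (seg β q)| ≤ 1 := by
    intro n p q
    simpa using abs_diff_le_of_mem (fun l => hfb n (seg β l)) p q
  have hshift : ∀ k l, Summable (fun m => u (m + k) l) :=
    fun k l => (summable_nat_add_iff k).mpr (hsum (seg β l))
  have hwshift : ∀ k, Summable (fun m => w (m + k)) :=
    fun k => (summable_nat_add_iff k).mpr hw_sum
  set T : ℕ → ℕ → ℝ := fun k l => ∑' m, u (m + k) l with hT_def
  set t : ℕ → ℝ := fun k => ∑' m, w (m + k) with ht_def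
  have ht_eq : ∀ k, t k = (1/5:ℝ)^k / 4 := by
    intro k
    have h1 : ∀ m, w (m + k) = (1/5:ℝ)^m * ((1/5)^(k+1)) := by
      intro m
      rw [hw_def]
      show (1/5:ℝ)^(m + k + 1) = _
      rw [show m + k + 1 = m + (k+1) by ring, pow_add]
    calc t k = ∑' m, (1/5:ℝ)^m * (1/5)^(k+1) := tsum_congr h1
      _ = (1 - 1/5:ℝ)⁻¹ * (1/5)^(k+1) := by
          rw [tsum_mul_right, tsum_geometric_of_lt_one (by norm_num) (by norm_num)]
      _ = (1/5:ℝ)^k / 4 := by rw [pow_succ]; norm_num; ring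
  have hT_mem : ∀ k l, T k l ∈ Set.Icc 0 (t k) := fun k l =>
    ⟨tsum_nonneg (fun m => hterm_nonneg _ _),
     Summable.tsum_le_tsum (fun m => hterm_le _ _) (hshift k l) (hwshift k)⟩
  have hTb : ∀ k p q, |T k p - T k q| ≤ t k := by
    intro k p q
    simpa using abs_diff_le_of_mem (hT_mem k) p q
  have hdecomp : ∀ k l, g (seg β l) = (∑ m ∈ Finset.range k, u m l) + T k l :=
    fun k l => (Summable.sum_add_tsum_nat_add k (hsum (seg β l))).symm
  have hAb : ∀ k p q, |(∑ m ∈ Finset.range k, u m p) - (∑ m ∈ Finset.range k, u m q)| ≤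
      ∑ m ∈ Finset.range k, w m := by
    intro k p q
    rw [← Finset.sum_sub_distrib]
    exact (Finset.abs_sum_le_sum_abs _ _).trans (Finset.sum_le_sum fun m _ => hub m p q)
  have hosczero : ∀ m, ¬ 0 < osc (f m) β → oscSeq (fun l => f m (seg β l)) = 0 := by
    intro m hm
    exact le_antisymm (not_lt.1 hm) (oscSeq_nonneg (hfnb m))
  have hAzero : ∀ k, (∀ m < k, ¬ 0 < osc (f m) β) →
      oscSeq (fun l => ∑ m ∈ Finset.range k, u m l) ≤ 0 := by
    intro k hk
    refine (oscSeq_sum (C := w) hub k).trans (le_of_eq ?_)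
    apply Finset.sum_eq_zero
    intro m hm
    have : oscSeq (u m) = w m * oscSeq (fun l => f m (seg β l)) :=
      oscSeq_const_mul (hw_pos m).le
    rw [this, hosczero m (hk m (Finset.mem_range.mp hm)), mul_zero]
  constructor
  · intro hg0
    by_contra hno
    push_neg at hno
    have hle : ∀ k : ℕ, osc g β ≤ t k := by
      intro k
      have he : (fun l => g (seg β l)) =
          fun l => (∑ m ∈ Finset.range k, u m l) + T k l := funext (hdecomp k)
      have h1 : oscSeq (fun l => g (seg β l)) ≤
          oscSeq (fun l => ∑ m ∈ Finset.range k, u m l) + oscSeq (T k) := by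
        rw [he]; exact oscSeq_add (hAb k) (hTb k)
      have h2 := hAzero k (fun m _ => not_lt.mpr (hno m))
      have h3 : oscSeq (T k) ≤ t k := oscSeq_le_of_diff (hTb k)
      calc osc g β = oscSeq (fun l => g (seg β l)) := rfl
        _ ≤ _ := h1
        _ ≤ 0 + t k := add_le_add h2 h3
        _ = t k := zero_add _
    have hlim : Tendsto t atTop (𝓝 0) := by
      have h : Tendsto (fun k : ℕ => (1/5:ℝ)^k / 4) atTop (𝓝 (0 / 4)) :=
        (tendsto_pow_atTop_nhds_zero_of_lt_one (by norm_num) (by norm_num)).div_const 4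
      rw [funext ht_eq]
      simpa using h
    exact absurd hg0 (not_lt.mpr (ge_of_tendsto' hlim hle))
  · rintro ⟨n, hn⟩
    have hex : ∃ m, 0 < osc (f m) β := ⟨n, hn⟩
    set n0 := Nat.find hex with hn0_def
    have h0 : 0 < osc (f n0) β := Nat.find_spec hex
    have hmin : ∀ m < n0, ¬ 0 < osc (f m) β := fun m hm => Nat.find_min hex hm
    have hhalf : 1/2 ≤ osc (f n0) β := by
      rcases hosc n0 β with h | h
      · rw [Set.mem_singleton_iff] at h; rw [h] at h0; exact absurd h0 (lt_irrefl 0)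
      · exact h.1
    have hdec : u n0 = fun l =>
        (g (seg β l) + -(∑ m ∈ Finset.range n0, u m l)) + -(T (n0+1) l) := by
      funext l
      have h := hdecomp (n0+1) l
      rw [Finset.sum_range_succ] at h
      linarith
    have hnegA : ∀ p q, |(-(∑ m ∈ Finset.range n0, u m p)) -
        (-(∑ m ∈ Finset.range n0, u m q))| ≤ ∑ m ∈ Finset.range n0, w m := by
      intro p q; rw [neg_sub_neg, abs_sub_comm]; exact hAb n0 p q
    have hnegT : ∀ p q, |(-(T (n0+1) p)) - (-(T (n0+1) q))| ≤ t (n0+1) := by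
      intro p q; rw [neg_sub_neg, abs_sub_comm]; exact hTb _ p q
    have hX : ∀ p q, |(g (seg β p) + -(∑ m ∈ Finset.range n0, u m p)) -
        (g (seg β q) + -(∑ m ∈ Finset.range n0, u m q))| ≤
        1 + ∑ m ∈ Finset.range n0, w m := by
      intro p q
      rw [add_sub_add_comm]
      exact (abs_add_le _ _).trans (add_le_add (hgb p q) (hnegA p q))
    have key : oscSeq (u n0) ≤
        oscSeq (fun l => g (seg β l) + -(∑ m ∈ Finset.range n0, u m l)) +
        oscSeq (fun l => -(T (n0+1) l)) := by
      rw [hdec]; exact oscSeq_add hX hnegT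
    have key2 : oscSeq (fun l => g (seg β l) + -(∑ m ∈ Finset.range n0, u m l)) ≤
        oscSeq (fun l => g (seg β l)) +
        oscSeq (fun l => -(∑ m ∈ Finset.range n0, u m l)) :=
      oscSeq_add hgb hnegA
    have hA0 : oscSeq (fun l => -(∑ m ∈ Finset.range n0, u m l)) ≤ 0 := by
      rw [oscSeq_neg]
      exact hAzero n0 hmin
    have hT0 : oscSeq (fun l => -(T (n0+1) l)) ≤ t (n0+1) := by
      rw [oscSeq_neg]
      exact oscSeq_le_of_diff (hTb (n0+1))
    have hB : w n0 * (1/2) ≤ oscSeq (u n0) := by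
      have h : oscSeq (u n0) = w n0 * oscSeq (fun l => f n0 (seg β l)) :=
        oscSeq_const_mul (hw_pos n0).le
      rw [h]
      exact mul_le_mul_of_nonneg_left hhalf (hw_pos n0).le
    have ht' : t (n0+1) = w n0 / 4 := by
      rw [ht_eq]
    have hpos := hw_pos n0
    have hfinal : osc g β = oscSeq (fun l => g (seg β l)) := rfl
    rw [hfinal]
    linarith
end
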